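/- arXiv:1503.07705 — 4 statements merged into one kernel-verified Lean document; each statement's English description precedes it below -/
import Mathlib

section
/- Let f = Σ_{j=0}^d a_j X^j be a real polynomial of degree d ≥ 2 all of whose roots are real. Then for every i ∈ {1,...,d-1}, a_i^2 ≥ ((d-i+1)/(d-i)) · ((i+1)/i) · a_{i-1} a_{i+1}. -/
open Polynomial Nat

private lemma descFactorial_succ_self (n : ℕ) : (n + 1).descFactorial n = (n + 1)! := by
  induction n with
  | zero => simp
  | succ n ih => rw [Nat.succ_descFactorial_succ, ih]; rfl

private lemma descFactorial_two_add (n : ℕ) : 2 * ((n + 2).descFactorial n) = (n + 2)! := by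
  induction n with
  | zero => simp [Nat.factorial]
  | succ n ih =>
      rw [show n + 1 + 2 = (n + 2) + 1 by ring, Nat.succ_descFactorial_succ,
        Nat.factorial_succ, ← ih]
      ring

private lemma deriv_real_rooted (p : Polynomial ℝ) (h : p.roots.card = p.natDegree)
    (h1 : p.natDegree ≠ 0) :
    (derivative p).roots.card = (derivative p).natDegree ∧
      (derivative p).natDegree = p.natDegree - 1 := by
  have hp0 : p ≠ 0 := by rintro rfl; simp at h1
  have hco : (derivative p).coeff (p.natDegree - 1) ≠ 0 := by
    rw [coeff_derivative, Nat.sub_add_cancel (Nat.one_le_iff_ne_zero.mpr h1)]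
    have hl : p.coeff p.natDegree ≠ 0 := by
      rw [← leadingCoeff]; exact leadingCoeff_ne_zero.mpr hp0
    apply mul_ne_zero hl
    positivity
  have hge := le_natDegree_of_ne_zero hco
  have hle := natDegree_derivative_le p
  have h2 := p.card_roots_le_derivative
  have h3 := (derivative p).card_roots'
  omega

private lemma iter_real_rooted (p : Polynomial ℝ) (h : p.roots.card = p.natDegree) :
    ∀ k, k ≤ p.natDegree →
      (derivative^[k] p).roots.card = (derivative^[k] p).natDegree ∧
        (derivative^[k] p).natDegree = p.natDegree - k := by
  intro k
  induction k with
  | zero => exact fun _ => ⟨h, by simp⟩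
  | succ k ih =>
      intro hk
      obtain ⟨hc, hd⟩ := ih (Nat.le_of_succ_le hk)
      rw [Function.iterate_succ_apply']
      have hne : (derivative^[k] p).natDegree ≠ 0 := by omega
      obtain ⟨a, b⟩ := deriv_real_rooted _ hc hne
      exact ⟨a, by omega⟩

private lemma quad_disc (q : Polynomial ℝ) (h2 : q.natDegree = 2) (hr : q.roots.card = 2) :
    4 * (q.coeff 0 * q.coeff 2) ≤ q.coeff 1 ^ 2 := by
  have hcard : q.roots.card = q.natDegree := by rw [hr, h2]
  have hfac := C_leadingCoeff_mul_prod_multiset_X_sub_C hcard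
  obtain ⟨u, v, huv⟩ := Multiset.card_eq_two.mp hr
  rw [huv] at hfac
  set c := q.leadingCoeff with hc
  have e : q = C c * (X ^ 2 - C (u + v) * X + C (u * v)) := by
    rw [← hfac]
    simp only [Multiset.insert_eq_cons, Multiset.map_cons, Multiset.map_singleton,
      Multiset.prod_cons, Multiset.prod_singleton, C_add, C_mul]
    ring
  have h0 : q.coeff 0 = c * (u * v) := by
    rw [e]; simp [coeff_C_mul, coeff_X_pow, coeff_X, coeff_C]
  have h1 : q.coeff 1 = c * (-(u + v)) := by
    rw [e]; simp [coeff_C_mul, coeff_X_pow, coeff_X, coeff_C]; try ring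
  have hq2' : q.coeff 2 = c := by
    rw [e]; simp [coeff_C_mul, coeff_X_pow, coeff_X, coeff_C]
  rw [h0, h1, hq2']
  nlinarith [sq_nonneg (c * (u - v))]

private lemma reverse_X_sub_C' {a : ℝ} (ha : a ≠ 0) :
    (X - C a).reverse = C (-a) * (X - C a⁻¹) := by
  rw [reverse, natDegree_X_sub_C, reflect_sub, reflect_C, reflect_one_X, pow_one,
    mul_sub, ← C_mul, neg_mul, mul_inv_cancel₀ ha]
  simp only [C_neg, C_1]
  ring

private lemma reverse_prod_X_sub_C' (s : Multiset ℝ) (hs : ∀ r ∈ s, r ≠ 0) :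
    ((s.map fun r => X - C r).prod).reverse =
      C ((s.map fun r => -r).prod) * ((s.map fun r => r⁻¹).map fun r => X - C r).prod := by
  induction s using Multiset.induction with
  | empty =>
      simp only [Multiset.map_zero, Multiset.prod_zero]
      rw [← C_1, reverse_C]
      simp
  | cons a s ih =>
      simp only [Multiset.map_cons, Multiset.prod_cons]
      rw [reverse_mul_of_domain, reverse_X_sub_C' (hs a (Multiset.mem_cons_self a s)),
        ih (fun r hr => hs r (Multiset.mem_cons_of_mem hr)), map_mul]
      ring

private lemma reverse_rooted (g : Polynomial ℝ) (hg : g.roots.card = g.natDegree)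
    (h0 : g.coeff 0 ≠ 0) :
    g.reverse.roots.card = g.natDegree ∧ g.reverse.natDegree = g.natDegree := by
  have hgne : g ≠ 0 := fun h => h0 (by simp [h])
  have htd : g.natTrailingDegree = 0 := natTrailingDegree_eq_zero.mpr (Or.inr h0)
  have hdeg : g.reverse.natDegree = g.natDegree := by rw [reverse_natDegree, htd, Nat.sub_zero]
  refine ⟨?_, hdeg⟩
  have hroots0 : ∀ r ∈ g.roots, r ≠ 0 := by
    intro r hr hr0
    subst hr0
    have := (mem_roots hgne).mp hr
    rw [IsRoot, ← coeff_zero_eq_eval_zero] at this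
    exact h0 this
  have hfac := C_leadingCoeff_mul_prod_multiset_X_sub_C hg
  have hrev : g.reverse = C (g.leadingCoeff * (g.roots.map fun r => -r).prod) *
      ((g.roots.map fun r => r⁻¹).map fun r => X - C r).prod := by
    conv_lhs => rw [← hfac]
    rw [reverse_mul_of_domain, reverse_C, reverse_prod_X_sub_C' _ hroots0, ← mul_assoc, ← C_mul]
  have hC : g.leadingCoeff * (g.roots.map fun r => -r).prod ≠ 0 := by
    apply mul_ne_zero (leadingCoeff_ne_zero.mpr hgne)
    apply Multiset.prod_ne_zero
    intro hmem
    obtain ⟨r, hr, hr0⟩ := Multiset.mem_map.mp hmem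
    exact hroots0 r hr (by linarith [hr0])
  rw [hrev, roots_C_mul _ hC, roots_multiset_prod_X_sub_C, Multiset.card_map, hg]

/-- Newton's inequalities: if all roots of a real polynomial of degree `d ≥ 2` are real,
then `a_i^2 ≥ ((d-i+1)/(d-i)) * ((i+1)/i) * a_{i-1} a_{i+1}` for `1 ≤ i ≤ d-1`. -/
theorem newton_inequalities (f : Polynomial ℝ) (d : ℕ) (hd : f.natDegree = d) (hd2 : 2 ≤ d)
    (hroots : (f.roots).card = d) :
    ∀ i : ℕ, 1 ≤ i → i ≤ d - 1 →
      (f.coeff i) ^ 2 ≥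
        (((d - i + 1 : ℕ) : ℝ) / ((d - i : ℕ) : ℝ)) * (((i + 1 : ℕ) : ℝ) / (i : ℝ)) *
          (f.coeff (i - 1) * f.coeff (i + 1)) := by
  intro i hi1 hi2
  obtain ⟨j, rfl⟩ : ∃ j, i = j + 1 := ⟨i - 1, by omega⟩
  obtain ⟨k, hk⟩ : ∃ k, d - (j + 1) = k + 1 := ⟨d - (j + 1) - 1, by omega⟩
  have e1 : d - (j + 1) + 1 = k + 2 := by omega
  have e3 : j + 1 - 1 = j := rfl
  rw [e1, hk, e3]
  have hrf : f.roots.card = f.natDegree := hroots.trans hd.symm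
  obtain ⟨hgc, hgd⟩ := iter_real_rooted f hrf j (by omega)
  set g := derivative^[j] f with hgdef
  have hgdeg : g.natDegree = k + 2 := by omega
  have hb : ∀ n, g.coeff n = ((n + j).descFactorial j : ℝ) * f.coeff (n + j) := by
    intro n
    rw [hgdef, coeff_iterate_derivative, nsmul_eq_mul]
  by_cases hsign : f.coeff j * f.coeff (j + 2) ≤ 0
  · have hpos : (0:ℝ) ≤ ((k + 2 : ℕ) : ℝ) / ((k + 1 : ℕ) : ℝ) *
        (((j + 1 + 1 : ℕ) : ℝ) / ((j + 1 : ℕ) : ℝ)) := by positivity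
    have h12 : j + 1 + 1 = j + 2 := rfl
    rw [h12]
    nlinarith [sq_nonneg (f.coeff (j + 1))]
  · push_neg at hsign
    have hf0 : f.coeff j ≠ 0 := by
      intro h; rw [h] at hsign; simp at hsign
    have hb0 : g.coeff 0 ≠ 0 := by
      rw [hb 0]
      simp only [Nat.zero_add]
      have hdne : (j.descFactorial j) ≠ 0 := by
        rw [Nat.descFactorial_self]; exact Nat.factorial_ne_zero j
      exact mul_ne_zero (Nat.cast_ne_zero.mpr hdne) hf0
    obtain ⟨hrc, hrd⟩ := reverse_rooted g hgc hb0
    set h := g.reverse with hhdef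
    obtain ⟨hqc, hqd⟩ := iter_real_rooted h (by rw [hrc, hrd]) k (by omega)
    set q := derivative^[k] h with hqdef
    have hq2 : q.natDegree = 2 := by omega
    have hqcard : q.roots.card = 2 := by omega
    have hdisc := quad_disc q hq2 hqcard
    have hqco : ∀ n, n ≤ 2 → q.coeff n = ((n + k).descFactorial k : ℝ) * g.coeff (2 - n) := by
      intro n hn
      rw [hqdef, coeff_iterate_derivative, nsmul_eq_mul, hhdef, coeff_reverse,
        revAt_le (by omega : n + k ≤ g.natDegree)]
      congr 2
      omega
    rw [hqco 0 (by norm_num), hqco 1 (by norm_num), hqco 2 (by norm_num),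
      hb 0, hb 1, hb 2] at hdisc
    simp only [Nat.zero_add] at hdisc
    rw [show 1 + j = j + 1 from by omega, show 2 + j = j + 2 from by omega,
      show 1 + k = k + 1 from by omega, show 2 + k = k + 2 from by omega] at hdisc
    -- abbreviations
    set B : ℝ := (k.descFactorial k : ℝ) with hB
    set A : ℝ := ((k + 1).descFactorial k : ℝ) with hA
    set Cc : ℝ := ((k + 2).descFactorial k : ℝ) with hCc
    set I0 : ℝ := (j.descFactorial j : ℝ) with hI0
    set I1 : ℝ := ((j + 1).descFactorial j : ℝ) with hI1
    set I2 : ℝ := ((j + 2).descFactorial j : ℝ) with hI2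
    have hnat : 4 * (k.descFactorial k * ((k + 2).descFactorial k) * (j.descFactorial j) *
        ((j + 2).descFactorial j)) * ((k + 1) * (j + 1)) =
        ((k + 1).descFactorial k) ^ 2 * ((j + 1).descFactorial j) ^ 2 * ((k + 2) * (j + 2)) := by
      apply Nat.eq_of_mul_eq_mul_left (show 0 < 4 by norm_num)
      calc 4 * (4 * (k.descFactorial k * ((k + 2).descFactorial k) * (j.descFactorial j) *
              ((j + 2).descFactorial j)) * ((k + 1) * (j + 1)))
          = 4 * (k.descFactorial k) * (2 * ((k + 2).descFactorial k)) * (j.descFactorial j) *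
              (2 * ((j + 2).descFactorial j)) * ((k + 1) * (j + 1)) := by ring
        _ = 4 * (k !) * ((k + 2)!) * (j !) * ((j + 2)!) * ((k + 1) * (j + 1)) := by
            rw [descFactorial_two_add, descFactorial_two_add, Nat.descFactorial_self,
              Nat.descFactorial_self]
        _ = 4 * (((k + 1)!) ^ 2 * ((j + 1)!) ^ 2 * ((k + 2) * (j + 2))) := by
            simp only [Nat.factorial_succ]; ring
        _ = 4 * (((k + 1).descFactorial k) ^ 2 * ((j + 1).descFactorial j) ^ 2 *
              ((k + 2) * (j + 2))) := by rw [descFactorial_succ_self, descFactorial_succ_self]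
    have hnatR : 4 * (B * Cc * I0 * I2) * (((k:ℝ) + 1) * ((j:ℝ) + 1)) =
        A ^ 2 * I1 ^ 2 * (((k:ℝ) + 2) * ((j:ℝ) + 2)) := by
      rw [hB, hA, hCc, hI0, hI1, hI2]
      exact_mod_cast congrArg (Nat.cast : ℕ → ℝ) hnat
    have hApos : (0:ℝ) < A := by
      rw [hA, descFactorial_succ_self]; exact_mod_cast (k + 1).factorial_pos
    have hI1pos : (0:ℝ) < I1 := by
      rw [hI1, descFactorial_succ_self]; exact_mod_cast (j + 1).factorial_pos
    rw [ge_iff_le]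
    have hkc : ((k + 2 : ℕ) : ℝ) = (k:ℝ) + 2 := by push_cast; ring
    have hkc1 : ((k + 1 : ℕ) : ℝ) = (k:ℝ) + 1 := by push_cast; ring
    have hjc : ((j + 1 + 1 : ℕ) : ℝ) = (j:ℝ) + 2 := by push_cast; ring
    have hjc1 : ((j + 1 : ℕ) : ℝ) = (j:ℝ) + 1 := by push_cast; ring
    rw [hkc, hkc1, hjc, hjc1]
    rw [_root_.div_mul_div_comm, div_mul_eq_mul_div, div_le_iff₀ (by positivity)]
    -- goal : ((k+2)*(j+2)) * (f.coeff j * f.coeff (j+2)) ≤ f.coeff (j+1)^2 * ((k+1)*(j+1))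
    have hA2 : (0:ℝ) < A ^ 2 * I1 ^ 2 := by positivity
    apply le_of_mul_le_mul_left _ hA2
    calc A ^ 2 * I1 ^ 2 * (((k:ℝ) + 2) * ((j:ℝ) + 2) * (f.coeff j * f.coeff (j + 2)))
        = (((k:ℝ) + 1) * ((j:ℝ) + 1)) *
            (4 * ((B * (I2 * f.coeff (j + 2))) * (Cc * (I0 * f.coeff j)))) := by
          linear_combination (f.coeff j * f.coeff (j + 2)) * hnatR.symm
      _ ≤ (((k:ℝ) + 1) * ((j:ℝ) + 1)) * ((A * (I1 * f.coeff (j + 1))) ^ 2) := by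
          apply mul_le_mul_of_nonneg_left _ (by positivity)
          exact hdisc
      _ = A ^ 2 * I1 ^ 2 * (f.coeff (j + 1) ^ 2 * (((k:ℝ) + 1) * ((j:ℝ) + 1))) := by ring
end

section
/- Let f = Σ_{i=0}^d a_i X^i ∈ ℝ⁺[X] of degree d, with f = Σ_{i=1}^k Π_{j=1}^m f_{i,j} where each f_{i,j} ∈ ℝ⁺[X]. If a_i^2 > k² d^{2m} a_{i-1} a_{i+1} for all i ∈ {1,...,d-1}, then some polynomial f_{i,j} has at least d/(km) nonzero monomials. -/
open Polynomial Finset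


section aux
variable (C : ℝ) (a : ℕ → ℝ) (d : ℕ)

lemma lcT (hC : 1 ≤ C) (hnn : ∀ i, 0 ≤ a i)
    (hpos : ∀ i, 1 ≤ i → i ≤ d - 1 → 0 < a i)
    (hlc : ∀ i, 1 ≤ i → i ≤ d - 1 → C * (a (i - 1) * a (i + 1)) < a i * a i) :
    ∀ n j : ℕ, 1 ≤ n → n + j ≤ d - 1 →
      C * (a (n - 1) * a (n + j + 1)) < a n * a (n + j) := by
  intro n j
  induction j with
  | zero => intro hn hnd; simpa using hlc n hn (by simpa using hnd)
  | succ j ih =>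
    intro hn hnd
    have h1 : n + j ≤ d - 1 := by omega
    have IH := ih hn h1
    have h2 : 1 ≤ n + j + 1 := by omega
    have hlc2 := hlc (n + j + 1) h2 hnd
    have e1 : n + j + 1 - 1 = n + j := by omega
    rw [e1] at hlc2
    have hA : 0 ≤ a (n - 1) := hnn _
    have hP : 0 < a (n + j) := hpos _ (by omega) h1
    have hQ : 0 < a (n + j + 1) := hpos _ h2 hnd
    have hB : 0 < a n := hpos _ hn (by omega)
    have hR : 0 ≤ a (n + j + 1 + 1) := hnn _
    have hC0 : (0:ℝ) ≤ C := by linarith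
    have hCA : 0 ≤ C * a (n - 1) := mul_nonneg hC0 hA
    have s1 := mul_le_mul_of_nonneg_left hlc2.le hCA
    have s2 := mul_lt_mul_of_pos_right IH hQ
    have s3 : C * C * (a (n - 1) * a (n + j + 1 + 1)) * a (n + j) <
        a n * a (n + j + 1) * a (n + j) := by nlinarith [s1, s2]
    have s4 : C * C * (a (n - 1) * a (n + j + 1 + 1)) < a n * a (n + j + 1) :=
      lt_of_mul_lt_mul_right s3 hP.le
    have s5 : C * (a (n - 1) * a (n + j + 1 + 1)) ≤ C * C * (a (n - 1) * a (n + j + 1 + 1)) := by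
      nlinarith [mul_nonneg (mul_nonneg hC0 (by linarith : (0:ℝ) ≤ C - 1)) (mul_nonneg hA hR)]
    have goal' : C * (a (n - 1) * a (n + j + 1 + 1)) < a n * a (n + j + 1) := by linarith
    have e : n + (j + 1) = n + j + 1 := by omega
    simpa only [e] using goal'

lemma lcStep (hC : 1 ≤ C) (hnn : ∀ i, 0 ≤ a i)
    (hpos : ∀ i, 1 ≤ i → i ≤ d - 1 → 0 < a i)
    (hlc : ∀ i, 1 ≤ i → i ≤ d - 1 → C * (a (i - 1) * a (i + 1)) < a i * a i) :
    ∀ p q : ℕ, p + 2 ≤ q → q ≤ d → a p * a q ≤ a (p + 1) * a (q - 1) := by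
  intro p q hpq hqd
  have hT := lcT C a d hC hnn hpos hlc (p + 1) (q - p - 2) (by omega) (by omega)
  have e1 : p + 1 - 1 = p := by omega
  have e2 : p + 1 + (q - p - 2) + 1 = q := by omega
  have e3 : p + 1 + (q - p - 2) = q - 1 := by omega
  rw [e1, e2, e3] at hT
  nlinarith [mul_nonneg (hnn p) (hnn q), hC]

lemma lcE (hC : 1 ≤ C) (hnn : ∀ i, 0 ≤ a i)
    (hpos : ∀ i, 1 ≤ i → i ≤ d - 1 → 0 < a i)
    (hlc : ∀ i, 1 ≤ i → i ≤ d - 1 → C * (a (i - 1) * a (i + 1)) < a i * a i) :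
    ∀ j p q : ℕ, q ≤ d → p + 2 * j ≤ q → a p * a q ≤ a (p + j) * a (q - j) := by
  intro j
  induction j with
  | zero => intro p q _ _; simp
  | succ j ih =>
    intro p q hqd hpq
    have h1 : a p * a q ≤ a (p + 1) * a (q - 1) :=
      lcStep C a d hC hnn hpos hlc p q (by omega) hqd
    have h2 := ih (p + 1) (q - 1) (by omega) (by omega)
    have e1 : p + 1 + j = p + (j + 1) := by omega
    have e2 : q - 1 - j = q - (j + 1) := by omega
    rw [e1, e2] at h2
    linarith

lemma lcMain (hC : 1 ≤ C) (hnn : ∀ i, 0 ≤ a i)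
    (hpos : ∀ i, 1 ≤ i → i ≤ d - 1 → 0 < a i)
    (hlc : ∀ i, 1 ≤ i → i ≤ d - 1 → C * (a (i - 1) * a (i + 1)) < a i * a i) :
    ∀ p n n' q : ℕ, 1 ≤ n → n ≤ n' → n' < q → q ≤ d → p + q = n + n' →
      C * (a p * a q) < a n * a n' := by
  intro p n n' q hn hnn' hn'q hqd hsum
  have hp : p < n := by omega
  have hE := lcE C a d hC hnn hpos hlc (n - 1 - p) p q hqd (by omega)
  have e1 : p + (n - 1 - p) = n - 1 := by omega
  have e2 : q - (n - 1 - p) = n' + 1 := by omega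
  rw [e1, e2] at hE
  have hT := lcT C a d hC hnn hpos hlc n (n' - n) hn (by omega)
  have e3 : n + (n' - n) = n' := by omega
  rw [e3] at hT
  calc C * (a p * a q) ≤ C * (a (n - 1) * a (n' + 1)) := by
        apply mul_le_mul_of_nonneg_left hE (by linarith)
    _ < a n * a n' := hT
end aux

lemma poly_coeff_prod {m : ℕ} (G : Fin m → Polynomial ℝ) (n : ℕ) :
    (∏ j, G j).coeff n =
      ∑ l ∈ Finset.finsuppAntidiag (Finset.univ : Finset (Fin m)) n, ∏ j, (G j).coeff (l j) := by
  have h1 : ((∏ j, G j : Polynomial ℝ) : PowerSeries ℝ) = ∏ j, ((G j : Polynomial ℝ) : PowerSeries ℝ) := by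
    simp [← Polynomial.coeToPowerSeries.ringHom_apply, map_prod]
  rw [← Polynomial.coeff_coe, h1, PowerSeries.coeff_prod]
  simp [Polynomial.coeff_coe]




lemma perI (k m d : ℕ) (hk : 0 < k) (hm : 0 < m) (hd : 1 ≤ d) (f : Polynomial ℝ)
    (hdeg : f.natDegree = d)
    (hnonneg : ∀ n, 0 ≤ f.coeff n)
    (hpos : ∀ i : ℕ, 1 ≤ i → i ≤ d → 0 < f.coeff i)
    (hlc' : ∀ i : ℕ, 1 ≤ i → i ≤ d - 1 →
      (k : ℝ) ^ 2 * (d : ℝ) ^ (2 * m) * (f.coeff (i - 1) * f.coeff (i + 1)) <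
        f.coeff i * f.coeff i)
    (G : Fin m → Polynomial ℝ) (hGn : ∀ j n, 0 ≤ (G j).coeff n)
    (hle : ∀ n, (∏ j, G j).coeff n ≤ f.coeff n)
    (ht : ∀ j, ((G j).support.card : ℝ) ≤ d) :
    ((Finset.Icc 1 d).filter
        (fun n => f.coeff n ≤ (k : ℝ) * (∏ j, G j).coeff n)).card ≤
      ∑ j, (G j).support.card := by
  classical
  set C : ℝ := (k : ℝ) ^ 2 * (d : ℝ) ^ (2 * m) with hCdef
  have hk1 : (1:ℝ) ≤ (k:ℝ) := by exact_mod_cast hk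
  have hd1 : (1:ℝ) ≤ (d:ℝ) := by exact_mod_cast hd
  have hC1 : 1 ≤ C := by
    have : (1:ℝ) ≤ (k:ℝ)^2 := one_le_pow₀ hk1
    have : (1:ℝ) ≤ (d:ℝ)^(2*m) := one_le_pow₀ hd1
    nlinarith [one_le_pow₀ hk1 (n := 2)]
  set a : ℕ → ℝ := fun n => f.coeff n with hadef
  set g : Polynomial ℝ := ∏ j, G j with hgdef
  set S : Finset ℕ :=
    (Finset.Icc 1 d).filter (fun n => f.coeff n ≤ (k : ℝ) * g.coeff n) with hSdef
  set Dn : ℕ → Finset (Fin m →₀ ℕ) := fun n =>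
    (Finset.finsuppAntidiag (Finset.univ : Finset (Fin m)) n).filter
      (fun l => ∀ j, l j ∈ (G j).support) with hDndef
  have hterm_nonneg : ∀ l : Fin m →₀ ℕ, 0 ≤ ∏ j, (G j).coeff (l j) :=
    fun l => Finset.prod_nonneg fun j _ => hGn j _
  have hgprod : ∀ n, g.coeff n = ∑ l ∈ Dn n, ∏ j, (G j).coeff (l j) := by
    intro n
    rw [hgdef, poly_coeff_prod]
    rw [hDndef]
    refine (Finset.sum_filter_of_ne ?_).symm
    intro l _ hne j
    by_contra hj
    exact hne (Finset.prod_eq_zero (Finset.mem_univ j)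
      (by simpa [Polynomial.mem_support_iff, not_not] using hj))
  have hgnonneg : ∀ n, 0 ≤ g.coeff n := by
    intro n; rw [hgprod]
    exact Finset.sum_nonneg fun l _ => hterm_nonneg l
  have hmemDn : ∀ (n : ℕ) (l : Fin m →₀ ℕ), (∑ j, l j) = n → (∀ j, l j ∈ (G j).support) →
      l ∈ Dn n := by
    intro n l hsum hsup
    rw [hDndef]
    refine Finset.mem_filter.2 ⟨?_, hsup⟩
    exact Finset.mem_finsuppAntidiag.2 ⟨hsum, Finset.subset_univ _⟩
  have hmem_le : ∀ (n : ℕ) (l : Fin m →₀ ℕ), l ∈ Dn n →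
      ∏ j, (G j).coeff (l j) ≤ g.coeff n := by
    intro n l hl
    rw [hgprod]
    exact Finset.single_le_sum (fun l _ => hterm_nonneg l) hl
  have hcardDn : ∀ n, ((Dn n).card : ℝ) ≤ (d : ℝ) ^ m := by
    intro n
    have h1 : (Dn n).card ≤ ∏ j, (G j).support.card := by
      rw [← Fintype.card_piFinset]
      refine Finset.card_le_card_of_injOn (fun l => ⇑l) ?_ ?_
      · intro l hl
        rw [Finset.mem_coe, Fintype.mem_piFinset]
        exact (Finset.mem_filter.1 (Finset.mem_coe.1 hl)).2
      · intro l₁ _ l₂ _ h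
        exact DFunLike.coe_injective h
    calc ((Dn n).card : ℝ) ≤ (∏ j, (G j).support.card : ℕ) := by exact_mod_cast h1
      _ = ∏ j : Fin m, ((G j).support.card : ℝ) := by push_cast; rfl
      _ ≤ ∏ j : Fin m, (d : ℝ) := Finset.prod_le_prod (fun j _ => by positivity) (fun j _ => ht j)
      _ = (d : ℝ) ^ m := by rw [Finset.prod_const, Finset.card_univ, Fintype.card_fin]
  -- choose near-maximal decompositions
  have hex : ∀ n : ℕ, ∃ l : Fin m →₀ ℕ, n ∈ S →
      ((∀ j, l j ∈ (G j).support) ∧ (∑ j, l j) = n ∧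
        f.coeff n ≤ (k : ℝ) * (d : ℝ) ^ m * ∏ j, (G j).coeff (l j)) := by
    intro n
    by_cases hn : n ∈ S
    · have hmem := Finset.mem_filter.1 hn
      have hicc := Finset.mem_Icc.1 hmem.1
      have han : 0 < f.coeff n := hpos n hicc.1 hicc.2
      have hgn : 0 < g.coeff n := by
        by_contra hg
        push_neg at hg
        have := hmem.2
        nlinarith [hgnonneg n]
      have hne : (Dn n).Nonempty := by
        by_contra hemp
        rw [Finset.not_nonempty_iff_eq_empty] at hemp
        rw [hgprod, hemp, Finset.sum_empty] at hgn
        exact lt_irrefl 0 hgn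
      obtain ⟨l, hl, hmax⟩ := Finset.exists_max_image (Dn n) (fun l => ∏ j, (G j).coeff (l j)) hne
      have hlsup : ∀ j, l j ∈ (G j).support := (Finset.mem_filter.1 hl).2
      have hlsum : (∑ j, l j) = n := by
        have := (Finset.mem_finsuppAntidiag.1 (Finset.mem_filter.1 hl).1).1
        simpa using this
      refine ⟨l, fun _ => ⟨hlsup, hlsum, ?_⟩⟩
      have hmax0 : 0 ≤ ∏ j, (G j).coeff (l j) := hterm_nonneg l
      have hb : g.coeff n ≤ ((Dn n).card : ℝ) * ∏ j, (G j).coeff (l j) := by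
        rw [hgprod]
        have := Finset.sum_le_card_nsmul (Dn n) (fun l => ∏ j, (G j).coeff (l j))
          (∏ j, (G j).coeff (l j)) (fun x hx => hmax x hx)
        simpa [nsmul_eq_mul] using this
      have hb2 : g.coeff n ≤ (d : ℝ) ^ m * ∏ j, (G j).coeff (l j) :=
        le_trans hb (mul_le_mul_of_nonneg_right (hcardDn n) hmax0)
      calc f.coeff n ≤ (k : ℝ) * g.coeff n := hmem.2
        _ ≤ (k : ℝ) * ((d : ℝ) ^ m * ∏ j, (G j).coeff (l j)) := by
            apply mul_le_mul_of_nonneg_left hb2 (by linarith)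
        _ = (k : ℝ) * (d : ℝ) ^ m * ∏ j, (G j).coeff (l j) := by ring
    · exact ⟨0, fun h => absurd h hn⟩
  choose e he using hex
  -- monotonicity of the chosen decompositions
  have hmono : ∀ n ∈ S, ∀ n' ∈ S, n < n' → ∀ j : Fin m, e n j ≤ e n' j := by
    intro n hn n' hn' hlt
    by_contra hc
    push_neg at hc
    obtain ⟨j0, hj0⟩ := hc
    obtain ⟨hsupN, hsumN, hbN⟩ := he n hn
    obtain ⟨hsupN', hsumN', hbN'⟩ := he n' hn'
    set u : Fin m → ℕ := fun j => max (e n j) (e n' j) with hudef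
    set v : Fin m → ℕ := fun j => min (e n j) (e n' j) with hvdef
    set p : ℕ := ∑ j, v j with hpdef
    set q : ℕ := ∑ j, u j with hqdef
    have hpq : p + q = n + n' := by
      rw [hpdef, hqdef, ← hsumN, ← hsumN', ← Finset.sum_add_distrib, ← Finset.sum_add_distrib]
      exact Finset.sum_congr rfl fun j _ => min_add_max _ _
    have hpn : p < n := by
      rw [hpdef, ← hsumN]
      apply Finset.sum_lt_sum (fun j _ => min_le_left _ _)
      exact ⟨j0, Finset.mem_univ _, by
        simpa [hvdef, min_eq_right hj0.le] using hj0⟩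
    have hqn : n' < q := by
      rw [hqdef, ← hsumN']
      apply Finset.sum_lt_sum (fun j _ => le_max_right _ _)
      exact ⟨j0, Finset.mem_univ _, by
        simpa [hudef, max_eq_left hj0.le] using hj0⟩
    have husup : ∀ j, u j ∈ (G j).support := by
      intro j
      rcases le_total (e n j) (e n' j) with h | h
      · simpa [hudef, max_eq_right h] using hsupN' j
      · simpa [hudef, max_eq_left h] using hsupN j
    have hvsup : ∀ j, v j ∈ (G j).support := by
      intro j
      rcases le_total (e n j) (e n' j) with h | h
      · simpa [hvdef, min_eq_left h] using hsupN j
      · simpa [hvdef, min_eq_right h] using hsupN' j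
    have hprodeq : (∏ j, (G j).coeff (v j)) * (∏ j, (G j).coeff (u j)) =
        (∏ j, (G j).coeff (e n j)) * (∏ j, (G j).coeff (e n' j)) := by
      rw [← Finset.prod_mul_distrib, ← Finset.prod_mul_distrib]
      refine Finset.prod_congr rfl fun j _ => ?_
      rcases le_total (e n j) (e n' j) with h | h
      · rw [hvdef, hudef]; simp [min_eq_left h, max_eq_right h]
      · rw [hvdef, hudef]; simp [min_eq_right h, max_eq_left h]; ring
    set U : Fin m →₀ ℕ := Finsupp.equivFunOnFinite.symm u with hUdef
    set V : Fin m →₀ ℕ := Finsupp.equivFunOnFinite.symm v with hVdef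
    have hUcoe : ∀ j, U j = u j := fun j => rfl
    have hVcoe : ∀ j, V j = v j := fun j => rfl
    have hUmem : U ∈ Dn q := hmemDn q U (by simp [hUcoe, hqdef]) (fun j => by rw [hUcoe]; exact husup j)
    have hVmem : V ∈ Dn p := hmemDn p V (by simp [hVcoe, hpdef]) (fun j => by rw [hVcoe]; exact hvsup j)
    have hule : ∏ j, (G j).coeff (u j) ≤ f.coeff q := by
      have := hmem_le q U hUmem
      simp only [hUcoe] at this
      exact le_trans this (hle q)
    have hvle : ∏ j, (G j).coeff (v j) ≤ f.coeff p := by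
      have := hmem_le p V hVmem
      simp only [hVcoe] at this
      exact le_trans this (hle p)
    by_cases hqd : q ≤ d
    · have hposint : ∀ i : ℕ, 1 ≤ i → i ≤ d - 1 → 0 < a i :=
        fun i h1 h2 => hpos i h1 (by omega)
      have hic := Finset.mem_Icc.1 (Finset.mem_filter.1 hn).1
      have hic' := Finset.mem_Icc.1 (Finset.mem_filter.1 hn').1
      have main := lcMain C a d hC1 (fun i => hnonneg i) hposint hlc' p n n' q
        hic.1 hlt.le hqn hqd hpq
      have hCeq : C = ((k : ℝ) * (d : ℝ) ^ m) * ((k : ℝ) * (d : ℝ) ^ m) := by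
        rw [hCdef, show 2 * m = m + m by ring, pow_add]; ring
      have h1 : a n * a n' ≤ ((k : ℝ) * (d : ℝ) ^ m * ∏ j, (G j).coeff (e n j)) *
          ((k : ℝ) * (d : ℝ) ^ m * ∏ j, (G j).coeff (e n' j)) := by
        apply mul_le_mul hbN hbN' (hnonneg n') (le_trans (hnonneg n) hbN)
      have h2 : ((k : ℝ) * (d : ℝ) ^ m * ∏ j, (G j).coeff (e n j)) *
          ((k : ℝ) * (d : ℝ) ^ m * ∏ j, (G j).coeff (e n' j)) =
          C * ((∏ j, (G j).coeff (v j)) * (∏ j, (G j).coeff (u j))) := by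
        rw [hprodeq, hCeq]; ring
      have h3 : C * ((∏ j, (G j).coeff (v j)) * (∏ j, (G j).coeff (u j))) ≤
          C * (a p * a q) := by
        apply mul_le_mul_of_nonneg_left _ (by linarith : (0:ℝ) ≤ C)
        apply mul_le_mul hvle hule (Finset.prod_nonneg fun j _ => hGn j _) (hnonneg p)
      rw [h2] at h1
      linarith
    · push_neg at hqd
      have hfq : f.coeff q = 0 :=
        Polynomial.coeff_eq_zero_of_natDegree_lt (by rw [hdeg]; exact hqd)
      have hupos : 0 < ∏ j, (G j).coeff (u j) :=
        Finset.prod_pos fun j _ =>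
          lt_of_le_of_ne (hGn j _) (Ne.symm (Polynomial.mem_support_iff.1 (husup j)))
      rw [hfq] at hule
      linarith
  -- the counting map
  set φ : ℕ → ℕ := fun n => ∑ j, ((G j).support.filter (fun x => x ≤ e n j)).card with hφdef
  have hφlt : ∀ n ∈ S, ∀ n' ∈ S, n < n' → φ n < φ n' := by
    intro n hn n' hn' hlt
    obtain ⟨hsupN, hsumN, _⟩ := he n hn
    obtain ⟨hsupN', hsumN', _⟩ := he n' hn'
    have hmono' := hmono n hn n' hn' hlt
    apply Finset.sum_lt_sum
    · intro j _
      apply Finset.card_le_card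
      apply Finset.monotone_filter_right
      intro x _ hx
      exact le_trans hx (hmono' j)
    · have hex1 : ∃ j1 : Fin m, e n j1 < e n' j1 := by
        by_contra hall
        push_neg at hall
        have heq : ∀ j, e n j = e n' j := fun j => le_antisymm (hmono' j) (hall j)
        have : n = n' := by
          rw [← hsumN, ← hsumN']
          exact Finset.sum_congr rfl fun j _ => heq j
        omega
      obtain ⟨j1, hj1⟩ := hex1
      refine ⟨j1, Finset.mem_univ _, ?_⟩
      apply Finset.card_lt_card
      rw [Finset.ssubset_iff_of_subset]
      · exact ⟨e n' j1, Finset.mem_filter.2 ⟨hsupN' j1, le_refl _⟩,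
          fun hmem => absurd (Finset.mem_filter.1 hmem).2 (not_le.2 hj1)⟩
      · apply Finset.monotone_filter_right
        intro x _ hx
        exact le_trans hx (hmono' j1)
  have hkey : S.card ≤ (Finset.Icc 1 (∑ j, (G j).support.card)).card := by
    apply Finset.card_le_card_of_injOn φ
    · intro n hn
      obtain ⟨hsupN, _, _⟩ := he n hn
      rw [Finset.mem_coe, Finset.mem_Icc]
      constructor
      · have j0 : Fin m := ⟨0, hm⟩
        have h1 : 1 ≤ ((G j0).support.filter (fun x => x ≤ e n j0)).card := by
          rw [Nat.one_le_iff_ne_zero, ← Nat.pos_iff_ne_zero, Finset.card_pos]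
          exact ⟨e n j0, Finset.mem_filter.2 ⟨hsupN j0, le_refl _⟩⟩
        calc 1 ≤ ((G j0).support.filter (fun x => x ≤ e n j0)).card := h1
          _ ≤ φ n := Finset.single_le_sum (f := fun j => ((G j).support.filter (fun x => x ≤ e n j)).card)
              (fun j _ => Nat.zero_le _) (Finset.mem_univ j0)
      · exact Finset.sum_le_sum fun j _ => Finset.card_le_card (Finset.filter_subset _ _)
    · intro n hn n' hn' heq
      by_contra hne
      rcases lt_or_gt_of_ne hne with h | h
      · exact absurd heq (Nat.ne_of_lt (hφlt n (Finset.mem_coe.1 hn) n' (Finset.mem_coe.1 hn') h))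
      · exact absurd heq (Ne.symm (Nat.ne_of_lt (hφlt n' (Finset.mem_coe.1 hn') n (Finset.mem_coe.1 hn) h)))
  calc S.card ≤ (Finset.Icc 1 (∑ j, (G j).support.card)).card := hkey
    _ = ∑ j, (G j).support.card := by rw [Nat.card_Icc]; omega


/-- Proposition 3.2: if `f = Σ_{i<k} Π_{j<m} f_{i,j}` with nonnegative coefficients has
degree `d` and satisfies `a_i² > k²·d^{2m}·a_{i-1}·a_{i+1}` for all interior `i`, then
some `f_{i,j}` has at least `d/(km)` monomials. -/
theorem some_factor_many_monomials (k m d : ℕ) (hk : 0 < k) (hm : 0 < m) (f : Polynomial ℝ) (hdeg : f.natDegree = d)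
    (F : Fin k → Fin m → Polynomial ℝ)
    (hf : f = ∑ i : Fin k, ∏ j : Fin m, F i j)
    (hFnonneg : ∀ i j n, 0 ≤ (F i j).coeff n)
    (hnonneg : ∀ n, 0 ≤ f.coeff n)
    (hlc : ∀ i : ℕ, 1 ≤ i → i ≤ d - 1 →
      (f.coeff i) ^ 2 > (k : ℝ) ^ 2 * (d : ℝ) ^ (2 * m) * (f.coeff (i - 1) * f.coeff (i + 1))) :
    ∃ i : Fin k, ∃ j : Fin m, (d : ℝ) / ((k : ℝ) * (m : ℝ)) ≤ ((F i j).support.card : ℝ) := by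
  classical
  by_contra hcon
  push_neg at hcon
  have hk1 : (1:ℝ) ≤ (k:ℝ) := by exact_mod_cast hk
  have hm1 : (1:ℝ) ≤ (m:ℝ) := by exact_mod_cast hm
  have hkm : (0:ℝ) < (k:ℝ) * (m:ℝ) := by nlinarith
  have hkm1 : (1:ℝ) ≤ (k:ℝ) * (m:ℝ) := by nlinarith
  -- d = 0 is impossible under hcon
  by_cases hd0 : d = 0
  · have := hcon ⟨0, hk⟩ ⟨0, hm⟩
    rw [hd0] at this
    simp at this
    exact absurd this (not_lt.2 (Nat.cast_nonneg _))
  have hd : 1 ≤ d := Nat.one_le_iff_ne_zero.2 hd0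
  have hd1 : (1:ℝ) ≤ (d:ℝ) := by exact_mod_cast hd
  -- basic positivity facts
  have hf0 : f ≠ 0 := by
    intro h
    rw [h, natDegree_zero] at hdeg
    omega
  have had : 0 < f.coeff d := by
    have h1 : f.coeff d ≠ 0 := by
      rw [← hdeg]
      exact f.coeff_ne_zero_of_eq_degree (degree_eq_natDegree hf0)
    exact lt_of_le_of_ne (hnonneg d) (Ne.symm h1)
  have hposint : ∀ i : ℕ, 1 ≤ i → i ≤ d - 1 → 0 < f.coeff i := by
    intro i h1 h2
    have hsq : 0 < f.coeff i ^ 2 :=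
      lt_of_le_of_lt (mul_nonneg (by positivity) (mul_nonneg (hnonneg _) (hnonneg _))) (hlc i h1 h2)
    have : f.coeff i ≠ 0 := by
      intro h; rw [h] at hsq; simp at hsq
    exact lt_of_le_of_ne (hnonneg i) (Ne.symm this)
  have hpos : ∀ i : ℕ, 1 ≤ i → i ≤ d → 0 < f.coeff i := by
    intro i h1 h2
    rcases eq_or_lt_of_le h2 with h | h
    · rw [h]; exact had
    · exact hposint i h1 (by omega)
  have hlc' : ∀ i : ℕ, 1 ≤ i → i ≤ d - 1 →
      (k : ℝ) ^ 2 * (d : ℝ) ^ (2 * m) * (f.coeff (i - 1) * f.coeff (i + 1)) <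
        f.coeff i * f.coeff i := by
    intro i h1 h2
    have := hlc i h1 h2
    nlinarith [this]
  -- products have nonnegative coefficients, bounded by f
  have hprodnn : ∀ (i : Fin k) (n : ℕ), 0 ≤ (∏ j, F i j).coeff n := by
    intro i n
    rw [poly_coeff_prod]
    exact Finset.sum_nonneg fun l _ => Finset.prod_nonneg fun j _ => hFnonneg i j _
  have hle : ∀ (i : Fin k) (n : ℕ), (∏ j, F i j).coeff n ≤ f.coeff n := by
    intro i n
    rw [hf, finset_sum_coeff]
    exact Finset.single_le_sum (fun i' _ => hprodnn i' n) (Finset.mem_univ i)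
  -- the dominating sets
  set S : Fin k → Finset ℕ := fun i =>
    (Finset.Icc 1 d).filter (fun n => f.coeff n ≤ (k : ℝ) * (∏ j, F i j).coeff n) with hSdef
  have hcover : Finset.Icc 1 d ⊆ Finset.univ.biUnion S := by
    intro n hn
    rw [Finset.mem_biUnion]
    by_contra hc
    push_neg at hc
    have hlt : ∀ i : Fin k, (k : ℝ) * (∏ j, F i j).coeff n < f.coeff n := by
      intro i
      have := hc i (Finset.mem_univ i)
      rw [hSdef] at this
      simp only [Finset.mem_filter, hn, true_and] at this
      linarith [not_le.1 this]
    have hicc := Finset.mem_Icc.1 hn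
    have hfn : f.coeff n = ∑ i : Fin k, (∏ j, F i j).coeff n := by
      rw [hf, finset_sum_coeff]
    have hsum : ∑ i : Fin k, (k : ℝ) * (∏ j, F i j).coeff n <
        ∑ _i : Fin k, f.coeff n := by
      apply Finset.sum_lt_sum_of_nonempty
      · exact ⟨⟨0, hk⟩, Finset.mem_univ _⟩
      · exact fun i _ => hlt i
    rw [← Finset.mul_sum, ← hfn, Finset.sum_const, Finset.card_univ, Fintype.card_fin,
      nsmul_eq_mul] at hsum
    have hfnpos : 0 < f.coeff n := hpos n hicc.1 hicc.2
    nlinarith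
  have hcount : d ≤ ∑ i : Fin k, (S i).card := by
    have h1 : (Finset.Icc 1 d).card = d := by rw [Nat.card_Icc]; omega
    calc d = (Finset.Icc 1 d).card := h1.symm
      _ ≤ (Finset.univ.biUnion S).card := Finset.card_le_card hcover
      _ ≤ ∑ i : Fin k, (S i).card := Finset.card_biUnion_le
  have hper : ∀ i : Fin k, (S i).card ≤ ∑ j, (F i j).support.card := by
    intro i
    apply perI k m d hk hm hd f hdeg hnonneg hpos hlc' (F i) (fun j n => hFnonneg i j n)
      (hle i)
    intro j
    calc ((F i j).support.card : ℝ) ≤ (d : ℝ) / ((k:ℝ)*(m:ℝ)) := (hcon i j).le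
      _ ≤ (d : ℝ) := by
          rw [div_le_iff₀ hkm]
          nlinarith
  -- final contradiction
  have hfinal : (d : ℝ) ≤ ∑ i : Fin k, ∑ j : Fin m, ((F i j).support.card : ℝ) := by
    have h1 : d ≤ ∑ i : Fin k, ∑ j : Fin m, (F i j).support.card :=
      le_trans hcount (Finset.sum_le_sum fun i _ => hper i)
    exact_mod_cast h1
  have hlt : ∑ i : Fin k, ∑ j : Fin m, ((F i j).support.card : ℝ) <
      ∑ _i : Fin k, ∑ _j : Fin m, (d : ℝ) / ((k:ℝ)*(m:ℝ)) := by
    apply Finset.sum_lt_sum_of_nonempty ⟨⟨0, hk⟩, Finset.mem_univ _⟩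
    intro i _
    apply Finset.sum_lt_sum_of_nonempty ⟨⟨0, hm⟩, Finset.mem_univ _⟩
    intro j _
    exact hcon i j
  have heq : ∑ _i : Fin k, ∑ _j : Fin m, (d : ℝ) / ((k:ℝ)*(m:ℝ)) = d := by
    rw [Finset.sum_const, Finset.sum_const, Finset.card_univ, Finset.card_univ,
      Fintype.card_fin, Fintype.card_fin, smul_smul, nsmul_eq_mul]
    push_cast
    field_simp
  rw [heq] at hlt
  linarith
end

section
/- Let f = Σ_{i=0}^d a_i X^i ∈ ℝ⁺[X] of degree d, with f = Σ_{i=1}^k Π_{j=1}^m f_{i,j} where m ≥ 2 and each f_{i,j} ∈ ℝ⁺[X] has at most t nonzero monomials. If a_i^2 > d^{2d} a_{i-1} a_{i+1} for all i ∈ {1,...,d-1}, then d ≤ k·m·t. -/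
open Polynomial Finset

private lemma aux_coeff_prod_nonneg {ι : Type*} [DecidableEq ι] (s : Finset ι)
    (F : ι → Polynomial ℝ) (h : ∀ j ∈ s, ∀ n, 0 ≤ (F j).coeff n) :
    ∀ n, 0 ≤ (∏ j ∈ s, F j).coeff n := by
  induction s using Finset.cons_induction with
  | empty => intro n; rw [Finset.prod_empty, coeff_one]; positivity
  | cons a s ha ih =>
    intro n
    rw [Finset.prod_cons, coeff_mul]
    refine Finset.sum_nonneg fun x _ => mul_nonneg (h a (Finset.mem_cons_self a s) x.1)
      (ih (fun j hj => h j (Finset.mem_cons_of_mem hj)) x.2)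

private lemma aux_le_coeff_prod {ι : Type*} [DecidableEq ι] (s : Finset ι)
    (F : ι → Polynomial ℝ) (h : ∀ j ∈ s, ∀ n, 0 ≤ (F j).coeff n) (τ : ι → ℕ) :
    ∏ j ∈ s, (F j).coeff (τ j) ≤ (∏ j ∈ s, F j).coeff (∑ j ∈ s, τ j) := by
  induction s using Finset.cons_induction with
  | empty => simp
  | cons a s ha ih =>
    rw [Finset.prod_cons, Finset.prod_cons, Finset.sum_cons, coeff_mul]
    have hmem : (τ a, ∑ j ∈ s, τ j) ∈ Finset.HasAntidiagonal.antidiagonal (τ a + ∑ j ∈ s, τ j) := by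
      simp
    calc (F a).coeff (τ a) * ∏ j ∈ s, (F j).coeff (τ j)
        ≤ (F a).coeff (τ a) * (∏ j ∈ s, F j).coeff (∑ j ∈ s, τ j) := by
          exact mul_le_mul_of_nonneg_left (ih (fun j hj => h j (Finset.mem_cons_of_mem hj)))
            (h a (Finset.mem_cons_self a s) _)
      _ ≤ ∑ x ∈ Finset.HasAntidiagonal.antidiagonal (τ a + ∑ j ∈ s, τ j),
            (F a).coeff x.1 * (∏ j ∈ s, F j).coeff x.2 := by
          exact Finset.single_le_sum
            (f := fun x : ℕ × ℕ => (F a).coeff x.1 * (∏ j ∈ s, F j).coeff x.2)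
            (fun x _ => mul_nonneg (h a (Finset.mem_cons_self a s) _)
            (aux_coeff_prod_nonneg s F (fun j hj => h j (Finset.mem_cons_of_mem hj)) _)) hmem

private lemma aux_exists_witness {ι : Type*} [DecidableEq ι] (t : ℕ) (s : Finset ι)
    (F : ι → Polynomial ℝ) (h : ∀ j ∈ s, ∀ n, 0 ≤ (F j).coeff n)
    (ht : ∀ j ∈ s, (F j).support.card ≤ t) :
    ∀ n : ℕ, 0 < (∏ j ∈ s, F j).coeff n →
      ∃ τ : ι → ℕ, (∀ j ∈ s, τ j ∈ (F j).support) ∧ (∑ j ∈ s, τ j = n) ∧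
        (∏ j ∈ s, F j).coeff n ≤ (t : ℝ) ^ s.card * ∏ j ∈ s, (F j).coeff (τ j) := by
  induction s using Finset.cons_induction with
  | empty =>
    intro n hn
    rw [Finset.prod_empty, coeff_one] at hn ⊢
    have hn0 : n = 0 := by by_contra h0; simp [h0] at hn
    refine ⟨fun _ => 0, by simp, by simp [hn0], by simp [hn0]⟩
  | cons a s ha ih =>
    intro n hn
    set P := ∏ j ∈ s, F j with hP
    have hPn : ∀ n, 0 ≤ P.coeff n :=
      aux_coeff_prod_nonneg s F (fun j hj => h j (Finset.mem_cons_of_mem hj))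
    have hFa : ∀ n, 0 ≤ (F a).coeff n := h a (Finset.mem_cons_self a s)
    rw [Finset.prod_cons] at hn
    rw [coeff_mul] at hn
    set S := (Finset.HasAntidiagonal.antidiagonal n).filter (fun x : ℕ × ℕ => x.1 ∈ (F a).support) with hS
    have hsumS : ∑ x ∈ S, (F a).coeff x.1 * P.coeff x.2
        = ∑ x ∈ Finset.HasAntidiagonal.antidiagonal n, (F a).coeff x.1 * P.coeff x.2 := by
      refine Finset.sum_filter_of_ne fun x _ hne => ?_
      by_contra hxs
      simp only [Polynomial.mem_support_iff, not_not] at hxs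
      exact hne (by rw [hxs, zero_mul])
    rw [← hsumS] at hn
    have hSne : S.Nonempty := by
      by_contra hne
      rw [Finset.not_nonempty_iff_eq_empty] at hne
      rw [hne, Finset.sum_empty] at hn
      exact lt_irrefl 0 hn
    obtain ⟨x, hxS, hxmax⟩ := S.exists_max_image (fun x => (F a).coeff x.1 * P.coeff x.2) hSne
    have hScard : S.card ≤ t := by
      refine le_trans (Finset.card_le_card_of_injOn (fun x => x.1) ?_ ?_) (ht a (Finset.mem_cons_self a s))
      · intro y hy; exact (Finset.mem_filter.mp hy).2
      · intro y hy z hz hyz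
        have hy' := Finset.HasAntidiagonal.mem_antidiagonal.mp (Finset.mem_filter.mp hy).1
        have hz' := Finset.HasAntidiagonal.mem_antidiagonal.mp (Finset.mem_filter.mp hz).1
        have h1 : y.1 = z.1 := hyz
        exact Prod.ext h1 (by omega)
    have hmax0 : 0 ≤ (F a).coeff x.1 * P.coeff x.2 := mul_nonneg (hFa _) (hPn _)
    have hsum_le : ∑ x ∈ S, (F a).coeff x.1 * P.coeff x.2
        ≤ (t : ℝ) * ((F a).coeff x.1 * P.coeff x.2) := by
      calc ∑ y ∈ S, (F a).coeff y.1 * P.coeff y.2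
          ≤ S.card • ((F a).coeff x.1 * P.coeff x.2) := Finset.sum_le_card_nsmul _ _ _ hxmax
        _ = (S.card : ℝ) * ((F a).coeff x.1 * P.coeff x.2) := nsmul_eq_mul _ _
        _ ≤ (t : ℝ) * ((F a).coeff x.1 * P.coeff x.2) := by
            exact mul_le_mul_of_nonneg_right (by exact_mod_cast hScard) hmax0
    have hterm_pos : 0 < (F a).coeff x.1 * P.coeff x.2 := by
      by_contra hle
      push_neg at hle
      have h0 : (t : ℝ) * ((F a).coeff x.1 * P.coeff x.2) ≤ 0 :=
        mul_nonpos_of_nonneg_of_nonpos (by positivity) hle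
      linarith
    have hca_pos : 0 < (F a).coeff x.1 := by
      rcases lt_or_eq_of_le (hFa x.1) with h1 | h1
      · exact h1
      · exfalso; rw [← h1, zero_mul] at hterm_pos; exact lt_irrefl 0 hterm_pos
    have hPy_pos : 0 < P.coeff x.2 := by
      rcases lt_or_eq_of_le (hPn x.2) with h1 | h1
      · exact h1
      · exfalso; rw [← h1, mul_zero] at hterm_pos; exact lt_irrefl 0 hterm_pos
    obtain ⟨τ', hτmem, hτsum, hτle⟩ := ih (fun j hj => h j (Finset.mem_cons_of_mem hj))
      (fun j hj => ht j (Finset.mem_cons_of_mem hj)) x.2 hPy_pos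
    refine ⟨Function.update τ' a x.1, ?_, ?_, ?_⟩
    · intro j hj
      rcases Finset.mem_cons.mp hj with rfl | hj'
      · rw [Function.update_self]
        exact (Finset.mem_filter.mp hxS).2
      · rw [Function.update_of_ne (by rintro rfl; exact ha hj')]
        exact hτmem j hj'
    · rw [Finset.sum_cons, Function.update_self,
        Finset.sum_congr rfl (fun j hj => by
          rw [Function.update_of_ne (by rintro rfl; exact ha hj)]), hτsum]
      exact Finset.HasAntidiagonal.mem_antidiagonal.mp (Finset.mem_filter.mp hxS).1
    · rw [Finset.prod_cons, Finset.prod_cons, coeff_mul, ← hsumS, Function.update_self,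
        Finset.prod_congr rfl (fun j hj => by
          rw [Function.update_of_ne (by rintro rfl; exact ha hj)]), Finset.card_cons]
      calc ∑ y ∈ S, (F a).coeff y.1 * P.coeff y.2
          ≤ (t : ℝ) * ((F a).coeff x.1 * P.coeff x.2) := hsum_le
        _ ≤ (t : ℝ) * ((F a).coeff x.1 * ((t : ℝ) ^ s.card * ∏ j ∈ s, (F j).coeff (τ' j))) := by
            refine mul_le_mul_of_nonneg_left (mul_le_mul_of_nonneg_left hτle (hFa _)) (by positivity)
        _ = (t : ℝ) ^ (s.card + 1) * ((F a).coeff x.1 * ∏ j ∈ s, (F j).coeff (τ' j)) := by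
            ring

private lemma aux_lemB (a : ℕ → ℝ) (d : ℕ) (C : ℝ) (hC : 1 ≤ C)
    (hnn : ∀ j, 0 ≤ a j)
    (hpos : ∀ j, 1 ≤ j → j ≤ d → 0 < a j)
    (hlc : ∀ i : ℕ, 1 ≤ i → i ≤ d - 1 → C * (a (i - 1) * a (i + 1)) < a i ^ 2) :
    ∀ n, 1 ≤ n → ∀ n', n ≤ n' → n' + 1 ≤ d → C * (a (n - 1) * a (n' + 1)) ≤ a n * a n' := by
  intro n hn n'
  induction n' using Nat.strong_induction_on with
  | _ n' ih =>
    intro hnn' hn'd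
    rcases eq_or_lt_of_le hnn' with rfl | hlt
    · have := hlc n hn (by omega)
      nlinarith [this]
    · have hprev : C * (a (n - 1) * a (n' - 1 + 1)) ≤ a n * a (n' - 1) := by
        refine ih (n' - 1) (by omega) (by omega) (by omega)
      have hn'1 : n' - 1 + 1 = n' := by omega
      rw [hn'1] at hprev
      have hlcn' : C * (a (n' - 1) * a (n' + 1)) < a n' ^ 2 := hlc n' (by omega) (by omega)
      have hp1 : 0 < a n' := hpos n' (by omega) (by omega)
      have hp2 : 0 < a (n' - 1) := hpos (n' - 1) (by omega) (by omega)
      have hp3 : 0 < a n := hpos n (by omega) (by omega)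
      have hC0 : (0:ℝ) ≤ C := by linarith
      have hmul : (C * (a (n - 1) * a n')) * (C * (a (n' - 1) * a (n' + 1)))
          ≤ (a n * a (n' - 1)) * (a n' ^ 2) := by
        refine mul_le_mul hprev hlcn'.le ?_ ?_
        · exact mul_nonneg hC0 (mul_nonneg (hnn _) (hnn _))
        · exact mul_nonneg hp3.le hp2.le
      have hx : (0:ℝ) ≤ (a (n - 1) * a (n' + 1)) * (a (n' - 1) * a n') :=
        mul_nonneg (mul_nonneg (hnn _) (hnn _)) (mul_nonneg hp2.le hp1.le)
      have hq : C * ((a (n - 1) * a (n' + 1)) * (a (n' - 1) * a n'))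
          ≤ C * C * ((a (n - 1) * a (n' + 1)) * (a (n' - 1) * a n')) := by
        nlinarith [mul_nonneg (mul_nonneg (sub_nonneg.mpr hC) hC0) hx]
      have hprod_pos : 0 < a (n' - 1) * a n' := mul_pos hp2 hp1
      have hfin : (C * (a (n - 1) * a (n' + 1))) * (a (n' - 1) * a n')
          ≤ (a n * a n') * (a (n' - 1) * a n') := by
        calc (C * (a (n - 1) * a (n' + 1))) * (a (n' - 1) * a n')
            = C * ((a (n - 1) * a (n' + 1)) * (a (n' - 1) * a n')) := by ring
          _ ≤ C * C * ((a (n - 1) * a (n' + 1)) * (a (n' - 1) * a n')) := hq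
          _ = (C * (a (n - 1) * a n')) * (C * (a (n' - 1) * a (n' + 1))) := by ring
          _ ≤ (a n * a (n' - 1)) * (a n' ^ 2) := hmul
          _ = (a n * a n') * (a (n' - 1) * a n') := by ring
      exact le_of_mul_le_mul_right hfin hprod_pos

private lemma aux_lemC (a : ℕ → ℝ) (d : ℕ) (C : ℝ) (hC : 1 ≤ C)
    (hnn : ∀ j, 0 ≤ a j)
    (hpos : ∀ j, 1 ≤ j → j ≤ d → 0 < a j)
    (hlc : ∀ i : ℕ, 1 ≤ i → i ≤ d - 1 → C * (a (i - 1) * a (i + 1)) < a i ^ 2) :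
    ∀ e, 1 ≤ e → ∀ n n', e ≤ n → n ≤ n' → n' + e ≤ d →
      C * (a (n - e) * a (n' + e)) ≤ a n * a n' := by
  intro e he
  induction e, he using Nat.le_induction with
  | base =>
    intro n n' hen hnn' hn'd
    exact aux_lemB a d C hC hnn hpos hlc n hen n' hnn' hn'd
  | succ e he ih =>
    intro n n' hen hnn' hn'd
    have hB : C * (a (n - e - 1) * a (n' + e + 1)) ≤ a (n - e) * a (n' + e) := by
      refine aux_lemB a d C hC hnn hpos hlc (n - e) (by omega) (n' + e) (by omega) (by omega)
    have hI : C * (a (n - e) * a (n' + e)) ≤ a n * a n' := ih n n' (by omega) hnn' (by omega)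
    have h1 : n - (e + 1) = n - e - 1 := by omega
    have h2 : n' + (e + 1) = n' + e + 1 := by omega
    rw [h1, h2]
    have h3 : a (n - e) * a (n' + e) ≤ a n * a n' := by
      have h0 : 0 ≤ a (n - e) * a (n' + e) := mul_nonneg (hnn _) (hnn _)
      nlinarith
    exact le_trans hB h3

/-- Theorem 1.2: if `f = Σ_{i<k} Π_{j<m} f_{i,j}` with `m ≥ 2`, each `f_{i,j}` with
nonnegative coefficients and at most `t` monomials, has degree `d` and satisfies the strong
log-concavity condition `a_i² > d^{2d}·a_{i-1}·a_{i+1}`, then `d ≤ k·m·t`. -/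
theorem strong_logconcave_degree_bound (k m t d : ℕ) (hm : 2 ≤ m)
    (f : Polynomial ℝ) (hdeg : f.natDegree = d)
    (F : Fin k → Fin m → Polynomial ℝ)
    (hf : f = ∑ i : Fin k, ∏ j : Fin m, F i j)
    (hFnonneg : ∀ i j n, 0 ≤ (F i j).coeff n)
    (ht : ∀ i j, (F i j).support.card ≤ t)
    (hnonneg : ∀ n, 0 ≤ f.coeff n)
    (hlc : ∀ i : ℕ, 1 ≤ i → i ≤ d - 1 →
      (f.coeff i) ^ 2 > (d : ℝ) ^ (2 * d) * (f.coeff (i - 1) * f.coeff (i + 1))) :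
    d ≤ k * m * t := by
  classical
  by_contra hcon
  push_neg at hcon
  -- hcon : k * m * t < d
  have hk1 : 1 ≤ k := by
    rcases Nat.eq_zero_or_pos k with rfl | h
    · exfalso
      have hf0 : f = 0 := by simpa using hf
      rw [hf0, natDegree_zero] at hdeg
      omega
    · exact h
  have ht1 : 1 ≤ t := by
    rcases Nat.eq_zero_or_pos t with rfl | h
    · exfalso
      have hF0 : ∀ i j, F i j = 0 := fun i j =>
        Polynomial.support_eq_empty.mp
          (Finset.card_eq_zero.mp (Nat.le_antisymm (ht i j) (Nat.zero_le _)))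
      have hf0 : f = 0 := by
        rw [hf]
        refine Finset.sum_eq_zero fun i _ => ?_
        exact Finset.prod_eq_zero (Finset.mem_univ (⟨0, by omega⟩ : Fin m)) (hF0 i _)
      rw [hf0, natDegree_zero] at hdeg
      omega
    · exact h
  have hd3 : 3 ≤ d := by
    have h2 : 1 * 2 * 1 ≤ k * m * t := Nat.mul_le_mul (Nat.mul_le_mul hk1 hm) ht1
    omega
  set C : ℝ := (d : ℝ) ^ (2 * d) with hCdef
  have hd1R : (1:ℝ) ≤ (d:ℝ) := by exact_mod_cast (by omega : 1 ≤ d)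
  have hCge1 : 1 ≤ C := one_le_pow₀ hd1R
  have hpos : ∀ n, 1 ≤ n → n ≤ d → 0 < f.coeff n := by
    intro n h1 h2
    rcases eq_or_lt_of_le h2 with heq | hlt
    · subst heq
      have hf0 : f ≠ 0 := by
        intro h0
        rw [h0, natDegree_zero] at hdeg
        omega
      have := Polynomial.leadingCoeff_ne_zero.mpr hf0
      rw [Polynomial.leadingCoeff, hdeg] at this
      exact lt_of_le_of_ne (hnonneg n) (Ne.symm this)
    · have hl := hlc n h1 (by omega)
      have h0 : 0 ≤ C * (f.coeff (n-1) * f.coeff (n+1)) :=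
        mul_nonneg (by positivity) (mul_nonneg (hnonneg _) (hnonneg _))
      have hsq : 0 < f.coeff n ^ 2 := lt_of_le_of_lt h0 hl
      have hne : f.coeff n ≠ 0 := by
        intro h0'
        rw [h0'] at hsq
        norm_num at hsq
      exact lt_of_le_of_ne (hnonneg n) (Ne.symm hne)
  set g : Fin k → Polynomial ℝ := fun i => ∏ j : Fin m, F i j with hgdef
  have hcoeff_sum : ∀ n, f.coeff n = ∑ i : Fin k, (g i).coeff n := fun n => by
    rw [hf, Polynomial.finset_sum_coeff]
  have hgnn : ∀ i n, 0 ≤ (g i).coeff n := fun i n =>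
    aux_coeff_prod_nonneg _ _ (fun j _ => hFnonneg i j) n
  have hgle : ∀ i n, (g i).coeff n ≤ f.coeff n := fun i n => by
    rw [hcoeff_sum n]
    exact Finset.single_le_sum (fun i' _ => hgnn i' n) (Finset.mem_univ i)
  set K : ℝ := (k : ℝ) * (t : ℝ) ^ m with hKdef
  have hK0 : 0 < K := by
    have : (0:ℝ) < (k:ℝ) := by exact_mod_cast hk1
    have ht0 : (0:ℝ) < (t:ℝ) := by exact_mod_cast ht1
    positivity
  have hwit : ∀ n : ℕ, ∃ i : Fin k, ∃ τ : Fin m → ℕ, 1 ≤ n → n ≤ d →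
      ((∀ j, τ j ∈ (F i j).support) ∧ (∑ j : Fin m, τ j = n) ∧
        f.coeff n ≤ K * ∏ j : Fin m, (F i j).coeff (τ j)) := by
    intro n
    by_cases hn : 1 ≤ n ∧ n ≤ d
    · obtain ⟨h1, h2⟩ := hn
      have hfn : 0 < f.coeff n := hpos n h1 h2
      have hne : (Finset.univ : Finset (Fin k)).Nonempty := ⟨⟨0, by omega⟩, Finset.mem_univ _⟩
      obtain ⟨i, _, himax⟩ := Finset.exists_max_image Finset.univ (fun i => (g i).coeff n) hne
      have hfk : f.coeff n ≤ (k : ℝ) * (g i).coeff n := by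
        rw [hcoeff_sum n]
        calc ∑ i', (g i').coeff n
            ≤ (Finset.univ : Finset (Fin k)).card • ((g i).coeff n) :=
              Finset.sum_le_card_nsmul _ _ _ (fun i' _ => himax i' (Finset.mem_univ i'))
          _ = ((Finset.univ : Finset (Fin k)).card : ℝ) * ((g i).coeff n) := nsmul_eq_mul _ _
          _ = (k : ℝ) * (g i).coeff n := by
              rw [Finset.card_univ, Fintype.card_fin]
      have hgpos : 0 < (g i).coeff n := by
        by_contra hle
        push_neg at hle
        have : (k:ℝ) * (g i).coeff n ≤ 0 :=
          mul_nonpos_of_nonneg_of_nonpos (Nat.cast_nonneg k) hle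
        linarith
      obtain ⟨τ, hτ1, hτ2, hτ3⟩ := aux_exists_witness t Finset.univ (F i)
        (fun j _ => hFnonneg i j) (fun j _ => ht i j) n hgpos
      refine ⟨i, τ, fun _ _ => ⟨fun j => hτ1 j (Finset.mem_univ j), hτ2, ?_⟩⟩
      calc f.coeff n ≤ (k:ℝ) * (g i).coeff n := hfk
        _ ≤ (k:ℝ) * ((t:ℝ) ^ (Finset.univ : Finset (Fin m)).card *
              ∏ j : Fin m, (F i j).coeff (τ j)) :=
            mul_le_mul_of_nonneg_left hτ3 (Nat.cast_nonneg k)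
        _ = K * ∏ j : Fin m, (F i j).coeff (τ j) := by
            rw [Finset.card_univ, Fintype.card_fin, hKdef]
            ring
    · exact ⟨⟨0, by omega⟩, fun _ => 0, fun h1 h2 => absurd ⟨h1, h2⟩ hn⟩
  choose I T hprop using hwit
  -- K^2 < C
  have hKC : K ^ 2 < C := by
    have hkd : k ≤ d - 1 := by
      have e1 : k * 1 * 1 ≤ k * m * t := Nat.mul_le_mul (Nat.mul_le_mul le_rfl (by omega)) ht1
      omega
    have htd : t ≤ d - 1 := by
      have e1 : 1 * 1 * t ≤ k * m * t := Nat.mul_le_mul (Nat.mul_le_mul hk1 (by omega)) le_rfl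
      omega
    have hmd : m ≤ d - 1 := by
      have e1 : 1 * m * 1 ≤ k * m * t := Nat.mul_le_mul (Nat.mul_le_mul hk1 le_rfl) ht1
      omega
    have h1 : t ^ m ≤ (d - 1) ^ (d - 1) :=
      le_trans (Nat.pow_le_pow_left htd m) (Nat.pow_le_pow_right (by omega) hmd)
    have h2 : k * t ^ m ≤ (d - 1) ^ d := by
      calc k * t ^ m ≤ (d - 1) * (d - 1) ^ (d - 1) := Nat.mul_le_mul hkd h1
        _ = (d - 1) ^ d := by
            rw [← pow_succ']
            congr 1
            omega
    have h3 : (k * t ^ m) ^ 2 < d ^ (2 * d) := by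
      calc (k * t ^ m) ^ 2 ≤ ((d - 1) ^ d) ^ 2 := Nat.pow_le_pow_left h2 2
        _ = (d - 1) ^ (2 * d) := by rw [← pow_mul, Nat.mul_comm]
        _ < d ^ (2 * d) := Nat.pow_lt_pow_left (by omega) (by omega)
    have : ((k * t ^ m : ℕ) : ℝ) ^ 2 < ((d : ℝ)) ^ (2 * d) := by
      rw [hCdef] at *
      exact_mod_cast h3
    calc K ^ 2 = ((k * t ^ m : ℕ) : ℝ) ^ 2 := by push_cast [hKdef]; ring
      _ < C := this
  -- coordinatewise monotonicity of witnesses within one fiber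
  have hmono : ∀ n n', 1 ≤ n → n ≤ n' → n' ≤ d → I n = I n' → ∀ j, T n j ≤ T n' j := by
    intro n n' h1 hnn' h2 hII j0
    by_contra hgt
    push_neg at hgt
    obtain ⟨hm1, hs1, hb1⟩ := hprop n h1 (le_trans hnn' h2)
    obtain ⟨hm2, hs2, hb2⟩ := hprop n' (by omega) h2
    rw [← hII] at hm2 hb2
    set σ : Fin m → ℕ := Function.update (T n) j0 (T n' j0) with hσdef
    set σ' : Fin m → ℕ := Function.update (T n') j0 (T n j0) with hσ'def
    set q := ∑ j : Fin m, σ j with hqdef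
    set p := ∑ j : Fin m, σ' j with hpdef
    have herase : (Finset.univ : Finset (Fin m)) \ {j0} = Finset.univ.erase j0 := by
      rw [Finset.erase_eq]
    have hq : q + T n j0 = n + T n' j0 := by
      have e1 : q = T n' j0 + ∑ j ∈ Finset.univ.erase j0, T n j := by
        rw [hqdef, Finset.sum_update_of_mem (Finset.mem_univ j0), herase]
      have e2 : T n j0 + ∑ j ∈ Finset.univ.erase j0, T n j = n := by
        rw [Finset.add_sum_erase _ _ (Finset.mem_univ j0)]; exact hs1
      omega
    have hp : p + T n' j0 = n' + T n j0 := by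
      have e1 : p = T n j0 + ∑ j ∈ Finset.univ.erase j0, T n' j := by
        rw [hpdef, Finset.sum_update_of_mem (Finset.mem_univ j0), herase]
      have e2 : T n' j0 + ∑ j ∈ Finset.univ.erase j0, T n' j = n' := by
        rw [Finset.add_sum_erase _ _ (Finset.mem_univ j0)]; exact hs2
      omega
    have hqlt : q < n := by omega
    have hplt : n' < p := by omega
    have hqp : q + p = n + n' := by omega
    set Pn := ∏ j : Fin m, (F (I n) j).coeff (T n j) with hPndef
    set Pn' := ∏ j : Fin m, (F (I n) j).coeff (T n' j) with hPn'def
    have hPn_pos : 0 < Pn := by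
      by_contra hle
      push_neg at hle
      have : K * Pn ≤ 0 := mul_nonpos_of_nonneg_of_nonpos hK0.le hle
      have := hpos n h1 (le_trans hnn' h2)
      linarith
    have hPn'_pos : 0 < Pn' := by
      by_contra hle
      push_neg at hle
      have : K * Pn' ≤ 0 := mul_nonpos_of_nonneg_of_nonpos hK0.le hle
      have := hpos n' (by omega) h2
      linarith
    have hswap : (∏ j : Fin m, (F (I n) j).coeff (σ j)) *
        (∏ j : Fin m, (F (I n) j).coeff (σ' j)) = Pn * Pn' := by
      rw [← Finset.prod_mul_distrib, hPndef, hPn'def, ← Finset.prod_mul_distrib]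
      refine Finset.prod_congr rfl fun j _ => ?_
      by_cases hj : j = j0
      · subst hj
        rw [hσdef, hσ'def, Function.update_self, Function.update_self]
        ring
      · rw [hσdef, hσ'def, Function.update_of_ne hj, Function.update_of_ne hj]
    have hσnn : 0 ≤ ∏ j : Fin m, (F (I n) j).coeff (σ j) :=
      Finset.prod_nonneg fun j _ => hFnonneg (I n) j _
    have hσ'nn : 0 ≤ ∏ j : Fin m, (F (I n) j).coeff (σ' j) :=
      Finset.prod_nonneg fun j _ => hFnonneg (I n) j _
    have hgq : (∏ j : Fin m, (F (I n) j).coeff (σ j)) ≤ f.coeff q :=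
      le_trans (aux_le_coeff_prod Finset.univ (F (I n)) (fun j _ => hFnonneg (I n) j) σ)
        (hgle (I n) q)
    have hgp : (∏ j : Fin m, (F (I n) j).coeff (σ' j)) ≤ f.coeff p :=
      le_trans (aux_le_coeff_prod Finset.univ (F (I n)) (fun j _ => hFnonneg (I n) j) σ')
        (hgle (I n) p)
    have hprodle : (∏ j : Fin m, (F (I n) j).coeff (σ j)) *
        (∏ j : Fin m, (F (I n) j).coeff (σ' j)) ≤ f.coeff q * f.coeff p :=
      mul_le_mul hgq hgp hσ'nn (hnonneg q)
    have hqppos : 0 < f.coeff q * f.coeff p := by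
      have : (0:ℝ) < Pn * Pn' := mul_pos hPn_pos hPn'_pos
      rw [← hswap] at this
      exact lt_of_lt_of_le this hprodle
    rcases le_or_gt p d with hpd | hpd
    · have hCineq := aux_lemC (fun n => f.coeff n) d C hCge1 hnonneg hpos
        (fun i hi1 hi2 => hlc i hi1 hi2) (n - q) (by omega) n n' (by omega) hnn' (by omega)
      have h1' : n - (n - q) = q := by omega
      have h2' : n' + (n - q) = p := by omega
      rw [h1', h2'] at hCineq
      have hup : f.coeff n * f.coeff n' ≤ K ^ 2 * (f.coeff q * f.coeff p) := by
        calc f.coeff n * f.coeff n' ≤ (K * Pn) * (K * Pn') := by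
              refine mul_le_mul hb1 hb2 (hnonneg n') ?_
              positivity
          _ = K ^ 2 * (Pn * Pn') := by ring
          _ = K ^ 2 * ((∏ j : Fin m, (F (I n) j).coeff (σ j)) *
                (∏ j : Fin m, (F (I n) j).coeff (σ' j))) := by rw [hswap]
          _ ≤ K ^ 2 * (f.coeff q * f.coeff p) := by
              refine mul_le_mul_of_nonneg_left hprodle ?_
              positivity
      nlinarith [mul_pos (sub_pos.mpr hKC) hqppos]
    · have h0 : f.coeff p = 0 := Polynomial.coeff_eq_zero_of_natDegree_lt (by rw [hdeg]; exact hpd)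
      rw [h0, mul_zero] at hqppos
      exact lt_irrefl 0 hqppos
  -- pigeonhole
  set A := Finset.Icc 1 d with hAdef
  have hAcard : A.card = d := by rw [hAdef, Nat.card_Icc]; omega
  have hfib : A.card = ∑ i : Fin k, (A.filter (fun n => I n = i)).card :=
    Finset.card_eq_sum_card_fiberwise (fun x _ => Finset.mem_univ (I x))
  have hfbound : ∀ i : Fin k, (A.filter (fun n => I n = i)).card ≤ m * t + 1 - m := by
    intro i
    set B := A.filter (fun n => I n = i) with hBdef
    set φ : ℕ → ℕ := fun n => ∑ j : Fin m, ((F i j).support.filter (fun v => v ≤ T n j)).card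
      with hφdef
    have hmemB : ∀ n ∈ B, 1 ≤ n ∧ n ≤ d ∧ I n = i := by
      intro n hn
      obtain ⟨hA, hI⟩ := Finset.mem_filter.mp hn
      obtain ⟨ha1, ha2⟩ := Finset.mem_Icc.mp hA
      exact ⟨ha1, ha2, hI⟩
    have hφmem : ∀ n ∈ B, φ n ∈ Finset.Icc m (m * t) := by
      intro n hn
      obtain ⟨h1, h2, h3⟩ := hmemB n hn
      obtain ⟨hmem, _, _⟩ := hprop n h1 h2
      rw [h3] at hmem
      rw [Finset.mem_Icc]
      constructor
      · calc m = ∑ _j : Fin m, 1 := by simp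
          _ ≤ φ n := Finset.sum_le_sum fun j _ =>
              Finset.card_pos.mpr ⟨T n j, Finset.mem_filter.mpr ⟨hmem j, le_refl _⟩⟩
      · calc φ n ≤ ∑ _j : Fin m, t := Finset.sum_le_sum fun j _ =>
              le_trans (Finset.card_le_card (Finset.filter_subset _ _)) (ht i j)
          _ = m * t := by simp [Finset.sum_const, mul_comm]
    have hφstrict : ∀ n ∈ B, ∀ n' ∈ B, n < n' → φ n < φ n' := by
      intro n hn n' hn' hlt
      obtain ⟨h1, h2, h3⟩ := hmemB n hn
      obtain ⟨h1', h2', h3'⟩ := hmemB n' hn'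
      have hTle : ∀ j, T n j ≤ T n' j :=
        hmono n n' h1 (le_of_lt hlt) h2' (h3.trans h3'.symm)
      obtain ⟨hmemn, hsumn, _⟩ := hprop n h1 h2
      obtain ⟨hmemn', hsumn', _⟩ := hprop n' h1' h2'
      rw [h3] at hmemn
      rw [h3'] at hmemn'
      have hex : ∃ j1 : Fin m, T n j1 < T n' j1 := by
        by_contra hno
        push_neg at hno
        have hsle : ∑ j : Fin m, T n' j ≤ ∑ j : Fin m, T n j :=
          Finset.sum_le_sum fun j _ => hno j
        rw [hsumn, hsumn'] at hsle
        omega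
      obtain ⟨j1, hj1⟩ := hex
      refine Finset.sum_lt_sum (fun j _ => ?_) ⟨j1, Finset.mem_univ j1, ?_⟩
      · refine Finset.card_le_card fun v hv => ?_
        obtain ⟨hv1, hv2⟩ := Finset.mem_filter.mp hv
        exact Finset.mem_filter.mpr ⟨hv1, le_trans hv2 (hTle j)⟩
      · refine Finset.card_lt_card ?_
        rw [Finset.ssubset_iff_of_subset ?hsub]
        case hsub =>
          intro v hv
          obtain ⟨hv1, hv2⟩ := Finset.mem_filter.mp hv
          exact Finset.mem_filter.mpr ⟨hv1, le_trans hv2 (le_of_lt hj1)⟩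
        refine ⟨T n' j1, Finset.mem_filter.mpr ⟨hmemn' j1, le_refl _⟩, ?_⟩
        intro hmm
        have := (Finset.mem_filter.mp hmm).2
        omega
    have hinj : Set.InjOn φ B := by
      intro x hx y hy hxy
      by_contra hne
      rcases lt_trichotomy x y with hl | he | hl
      · have := hφstrict x hx y hy hl
        omega
      · exact hne he
      · have := hφstrict y hy x hx hl
        omega
    calc B.card ≤ (Finset.Icc m (m * t)).card :=
        Finset.card_le_card_of_injOn φ (fun n hn => hφmem n hn) hinj
      _ = m * t + 1 - m := by rw [Nat.card_Icc]
  have hdle : d ≤ k * (m * t + 1 - m) := by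
    rw [← hAcard, hfib]
    calc ∑ i : Fin k, (A.filter fun n => I n = i).card
        ≤ ∑ _i : Fin k, (m * t + 1 - m) := Finset.sum_le_sum fun i _ => hfbound i
      _ = k * (m * t + 1 - m) := by
          rw [Finset.sum_const, Finset.card_univ, Fintype.card_fin, smul_eq_mul]
  have hmt : m ≤ m * t := Nat.le_mul_of_pos_right m (by omega)
  have hle2 : k * (m * t + 1 - m) ≤ k * (m * t) := Nat.mul_le_mul_left k (by omega)
  have hassoc : k * (m * t) = k * m * t := (Nat.mul_assoc k m t).symm
  omega
end

section
/- Let f = g·h where g, h ∈ ℝ⁺[X] each have at most t nonzero monomials. If f satisfies the Kurtz condition a_i^2 > 4 a_{i-1} a_{i+1} for all i ∈ {1,...,deg(f) - 1} (where a_i are the coefficients of f), then deg(f) ≤ 2t. -/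
open Polynomial Finset

section KurtzAux

lemma alt_le (M : ℕ) : ∀ (c : ℕ → ℝ), (∀ k, 0 ≤ c k) → (∀ k, c (k+1) ≤ c k) →
    0 ≤ ∑ k ∈ range (M+1), (-1:ℝ)^k * c k ∧ ∑ k ∈ range (M+1), (-1:ℝ)^k * c k ≤ c 0 := by
  induction M with
  | zero => intro c h0 _; simpa using h0 0
  | succ M ih =>
    intro c h0 hd
    have key : ∑ k ∈ range (M+1+1), (-1:ℝ)^k * c k
        = c 0 - ∑ k ∈ range (M+1), (-1:ℝ)^k * c (k+1) := by
      rw [Finset.sum_range_succ' (fun k => (-1:ℝ)^k * c k) (M+1)]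
      have h : ∀ k, (-1:ℝ)^(k+1) * c (k+1) = -((-1:ℝ)^k * c (k+1)) := by
        intro k; ring
      simp_rw [h]
      simp
      ring
    obtain ⟨h1, h2⟩ := ih (fun k => c (k+1)) (fun k => h0 _) (fun k => hd _)
    constructor
    · rw [key]; have := hd 0; linarith
    · rw [key]; linarith

lemma beta_step (p : Polynomial ℝ) (hpos : ∀ i ≤ p.natDegree, 0 < p.coeff i)
    (hk : ∀ i, 1 ≤ i → i + 1 ≤ p.natDegree →
      4*(p.coeff (i-1) * p.coeff (i+1)) < (p.coeff i)^2)
    (j : ℕ) (h1 : 1 ≤ j) (h2 : j + 1 ≤ p.natDegree) :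
    4 * (p.coeff (j-1) / p.coeff j) < p.coeff j / p.coeff (j+1) := by
  have hj : 0 < p.coeff j := hpos j (by omega)
  have hj1 : 0 < p.coeff (j+1) := hpos (j+1) (by omega)
  have h3 := hk j h1 h2
  rw [mul_div_assoc', div_lt_div_iff₀ hj hj1]
  nlinarith [h3]

lemma beta_mono (p : Polynomial ℝ) (hpos : ∀ i ≤ p.natDegree, 0 < p.coeff i)
    (hk : ∀ i, 1 ≤ i → i + 1 ≤ p.natDegree →
      4*(p.coeff (i-1) * p.coeff (i+1)) < (p.coeff i)^2)
    (j j' : ℕ) (h1 : 1 ≤ j) (h2 : j ≤ j') (h3 : j' ≤ p.natDegree) :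
    p.coeff (j-1) / p.coeff j ≤ p.coeff (j'-1) / p.coeff j' := by
  induction j' with
  | zero => omega
  | succ m ih =>
    rcases Nat.lt_or_ge j (m+1) with hlt | hge
    · have hm : 1 ≤ m := by omega
      have step := beta_step p hpos hk m hm h3
      have hb : 0 ≤ p.coeff (m-1) / p.coeff m :=
        div_nonneg (hpos _ (by omega)).le (hpos _ (by omega)).le
      have := ih (by omega) (by omega)
      have e : m + 1 - 1 = m := by omega
      rw [e]
      linarith
    · have : j = m + 1 := by omega
      subst this; rfl


lemma kurtz_sign (p : Polynomial ℝ) (hpos : ∀ i ≤ p.natDegree, 0 < p.coeff i)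
    (hk : ∀ i, 1 ≤ i → i + 1 ≤ p.natDegree →
      4*(p.coeff (i-1) * p.coeff (i+1)) < (p.coeff i)^2)
    (i : ℕ) (hi1 : 1 ≤ i) (hin : i ≤ p.natDegree) :
    0 < (-1:ℝ)^i * p.eval (-(2 * (p.coeff (i-1) / p.coeff i))) := by
  set n := p.natDegree with hn
  set a : ℕ → ℝ := fun j => p.coeff j with ha
  set s : ℝ := 2 * (a (i-1) / a i) with hs
  have hai : 0 < a i := hpos i hin
  have haim : 0 < a (i-1) := hpos (i-1) (by omega)
  have hspos : 0 < s := by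
    rw [hs]; positivity
  have han : ∀ j, n < j → a j = 0 := fun j hj => coeff_eq_zero_of_natDegree_lt hj
  have hanneg : ∀ j, 0 ≤ a j := by
    intro j
    rcases le_or_gt j n with hj | hj
    · exact (hpos j hj).le
    · rw [han j hj]
  set T : ℕ → ℝ := fun j => a j * s ^ j with hT
  have hTnn : ∀ j, 0 ≤ T j := fun j => mul_nonneg (hanneg j) (by positivity)
  have hTipos : 0 < T i := mul_pos hai (by positivity)
  -- increasing up to i-2
  have htD : ∀ j, j + 1 ≤ i - 2 → T j ≤ T (j+1) := by
    intro j hj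
    have hj1n : j + 1 ≤ n := by omega
    have hb := beta_mono p hpos hk (j+1) i (by omega) (by omega) hin
    have e : j + 1 - 1 = j := by omega
    rw [e] at hb
    have haj1 : 0 < a (j+1) := hpos _ (by omega)
    have : a j ≤ s * a (j+1) := by
      rw [div_le_div_iff₀ haj1 hai] at hb
      rw [hs]
      rw [div_eq_mul_inv]
      have := hai
      calc a j = (a j / a (j+1)) * a (j+1) := by field_simp
        _ ≤ (a (i-1) / a i) * a (j+1) := by
            apply mul_le_mul_of_nonneg_right _ haj1.le
            rw [div_le_div_iff₀ haj1 hai]; linarith [hb]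
        _ ≤ 2 * (a (i-1) * (a i)⁻¹) * a (j+1) := by
            have h2 : 0 ≤ a (i-1) / a i := by positivity
            rw [div_eq_mul_inv] at h2 ⊢
            nlinarith
    calc T j = a j * s ^ j := rfl
      _ ≤ (s * a (j+1)) * s ^ j := by
          apply mul_le_mul_of_nonneg_right this (by positivity)
      _ = a (j+1) * s ^ (j+1) := by ring
  -- decreasing from i+1 on
  have htU : ∀ j, i + 1 ≤ j → T (j+1) ≤ T j := by
    intro j hj
    rcases lt_or_ge n (j+1) with hgt | hle
    · rw [show T (j+1) = a (j+1) * s^(j+1) from rfl, han _ hgt]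
      simpa using hTnn j
    · have haj : 0 < a j := hpos _ (by omega)
      have haj1 : 0 < a (j+1) := hpos _ hle
      have h1 : 4 * (a (i-1) / a i) < a i / a (i+1) := by
        have := beta_step p hpos hk i hi1 (by omega)
        simpa using this
      have h2 : a i / a (i+1) ≤ a j / a (j+1) := by
        have := beta_mono p hpos hk (i+1) (j+1) (by omega) (by omega) hle
        simpa using this
      have hsle : s ≤ a j / a (j+1) := by
        have hbnn : 0 ≤ a (i-1) / a i := by positivity
        rw [hs]; linarith
      have : a (j+1) * s ≤ a j := by
        rw [le_div_iff₀ haj1] at hsle; linarith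
    
      calc T (j+1) = (a (j+1) * s) * s ^ j := by rw [hT]; ring
        _ ≤ a j * s ^ j := mul_le_mul_of_nonneg_right this (by positivity)
  -- middle identities
  have hTmid : T i = 2 * T (i-1) := by
    have e : i = (i - 1) + 1 := by omega
    calc T i = a i * s ^ i := rfl
      _ = a i * s ^ ((i-1)+1) := by rw [← e]
      _ = (a i * s) * s ^ (i-1) := by ring
      _ = 2 * a (i-1) * s ^ (i-1) := by
          rw [hs]; field_simp
      _ = 2 * T (i-1) := by rw [hT]; ring
  have hTup : T (i+1) < T i / 2 := by
    rcases lt_or_ge n (i+1) with hgt | hle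
    · rw [show T (i+1) = a (i+1) * s^(i+1) from rfl, han _ hgt]
      simpa using (by positivity : (0:ℝ) < T i / 2)
    · have hk3 := hk i hi1 hle
      have haj1 : 0 < a (i+1) := hpos _ hle
      have : a (i+1) * s < a i / 2 := by
        rw [hs]
        rw [div_eq_mul_inv]
        have hne : a i ≠ 0 := ne_of_gt hai
        rw [show a (i+1) * (2 * (a (i-1) * (a i)⁻¹)) = (4 * (a (i-1) * a (i+1))) / (2 * a i) by field_simp; ring]
        rw [div_lt_div_iff₀ (by linarith) (by norm_num)]
        nlinarith [hk3]
      calc T (i+1) = (a (i+1) * s) * s ^ i := by rw [hT]; ring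
        _ < (a i / 2) * s ^ i := by
            apply mul_lt_mul_of_pos_right this (by positivity)
        _ = T i / 2 := by rw [hT]; ring
  -- expand the evaluation
  have expand : (-1:ℝ)^i * p.eval (-s) = ∑ j ∈ range (n+1), (-1:ℝ)^(i+j) * T j := by
    rw [eval_eq_sum_range, Finset.mul_sum]
    apply Finset.sum_congr rfl
    intro j _
    have : (-s)^j = (-1:ℝ)^j * s^j := by
      rw [neg_pow]
    rw [this, pow_add, hT]
    ring
  have hsplit : n + 1 = (i+1) + (n-i) := by omega
  rw [show (-(2 * (p.coeff (i-1) / p.coeff i))) = -s from by rw [hs], expand, hsplit,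
    Finset.sum_range_add]
  -- part 1
  have hpart1 : ∑ j ∈ range (i+1), (-1:ℝ)^(i+j) * T j
      = (∑ j ∈ range (i-1), (-1:ℝ)^(i+j) * T j) + T i - T (i-1) := by
    have e1 : i + 1 = (i-1) + 1 + 1 := by omega
    rw [e1, Finset.sum_range_succ, Finset.sum_range_succ]
    have e2 : i - 1 + 1 = i := by omega
    rw [e2]
    have o1 : (-1:ℝ)^(i + (i-1)) = -1 := Odd.neg_one_pow ⟨i-1, by omega⟩
    have o2 : (-1:ℝ)^(i + i) = 1 := Even.neg_one_pow ⟨i, by omega⟩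
    rw [o1, o2]; ring
  have hD : 0 ≤ ∑ j ∈ range (i-1), (-1:ℝ)^(i+j) * T j := by
    rcases Nat.lt_or_ge i 2 with h2 | h2
    · have : i - 1 = 0 := by omega
      rw [this]; simp
    · have hrefl := Finset.sum_range_reflect (fun j => (-1:ℝ)^(i+j) * T j) (i-1)
      rw [← hrefl]
      have e3 : i - 1 = (i-2) + 1 := by omega
      have congrfun : ∀ j ∈ range (i-1),
          (-1:ℝ)^(i + (i-1-1-j)) * T (i-1-1-j) = (-1:ℝ)^j * T (i-2-j) := by
        intro j hj
        rw [Finset.mem_range] at hj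
        have e4 : i - 1 - 1 - j = i - 2 - j := by omega
        have e5 : i + (i-2-j) = j + 2*(i-1-j) := by omega
        rw [e4, e5, pow_add, pow_mul]
        norm_num
      rw [Finset.sum_congr rfl congrfun]
      have hdec : ∀ k, T (i-2-(k+1)) ≤ T (i-2-k) := by
        intro k
        rcases le_or_gt (k+1) (i-2) with hkk | hkk
        · have e6 : i - 2 - (k+1) + 1 = i - 2 - k := by omega
          have := htD (i-2-(k+1)) (by omega)
          rwa [e6] at this
        · have e7 : i - 2 - (k+1) = i - 2 - k := by omega
          rw [e7]
      have := (alt_le (i-2) (fun k => T (i-2-k)) (fun k => hTnn _) hdec).1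
      rw [e3]
      simpa using this
  -- part U
  have hU : -T (i+1) ≤ ∑ k ∈ range (n-i), (-1:ℝ)^(i+(i+1+k)) * T (i+1+k) := by
    have congrfun : ∀ k ∈ range (n-i),
        (-1:ℝ)^(i+(i+1+k)) * T (i+1+k) = -((-1:ℝ)^k * T (i+1+k)) := by
      intro k _
      have e5 : i + (i+1+k) = k + (2*i+1) := by omega
      rw [e5, pow_add]
      have : (-1:ℝ)^(2*i+1) = -1 := Odd.neg_one_pow ⟨i, by omega⟩
      rw [this]; ring
    rw [Finset.sum_congr rfl congrfun, Finset.sum_neg_distrib]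
    rcases Nat.eq_zero_or_pos (n - i) with hni | hni
    · rw [hni]
      simp only [Finset.range_zero, Finset.sum_empty, neg_zero]
      have : T (i+1) = 0 := by
        rw [hT]; simp only
        rw [han (i+1) (by omega)]; ring
      rw [this]; norm_num
    · have e8 : n - i = (n-i-1) + 1 := by omega
      have hdec : ∀ k, T (i+1+(k+1)) ≤ T (i+1+k) := by
        intro k
        have := htU (i+1+k) (by omega)
        have e9 : i+1+k+1 = i+1+(k+1) := by omega
        rwa [e9] at this
      obtain ⟨hge0, hle0⟩ := alt_le (n-i-1) (fun k => T (i+1+k)) (fun k => hTnn _) hdec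
      rw [e8]
      have h10 : T (i+1+0) = T (i+1) := by norm_num
      simp only [h10] at hle0
      linarith
  rw [hpart1]
  have := hTup
  linarith


lemma kurtz_splits (p : Polynomial ℝ) (hpos : ∀ i ≤ p.natDegree, 0 < p.coeff i)
    (hk : ∀ i, 1 ≤ i → i + 1 ≤ p.natDegree →
      4*(p.coeff (i-1) * p.coeff (i+1)) < (p.coeff i)^2) :
    Splits p := by
  set n := p.natDegree with hn
  have hp0 : p ≠ 0 := by
    intro h
    have := hpos 0 (Nat.zero_le _)
    rw [h] at this; simp at this
  set x : ℕ → ℝ := fun i => if i = 0 then 0 else -(2 * (p.coeff (i-1) / p.coeff i)) with hx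
  have hsign : ∀ i ≤ n, 0 < (-1:ℝ)^i * p.eval (x i) := by
    intro i hi
    rcases Nat.eq_zero_or_pos i with h0 | h0
    · subst h0
      simp only [hx, if_pos rfl]
      simpa [← coeff_zero_eq_eval_zero] using hpos 0 (Nat.zero_le _)
    · have := kurtz_sign p hpos hk i h0 hi
      simpa [hx, Nat.pos_iff_ne_zero.mp h0] using this
  have hxdec : ∀ i, 1 ≤ i → i ≤ n → x i < x (i-1) := by
    intro i h1 h2
    rcases Nat.lt_or_ge i 2 with hi2 | hi2
    · have : i = 1 := by omega
      subst this
      have h1p := hpos 0 (by omega)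
      have h2p := hpos 1 (by omega)
      have hd : 0 < p.coeff 0 / p.coeff 1 := div_pos h1p h2p
      simp only [hx]
      norm_num
      linarith
    · have hstep := beta_step p hpos hk (i-1) (by omega) (by omega)
      have e : i - 1 + 1 = i := by omega
      rw [e] at hstep
      have hb : 0 < p.coeff (i-1-1) / p.coeff (i-1) :=
        div_pos (hpos _ (by omega)) (hpos _ (by omega))
      simp only [hx, if_neg (by omega : ¬ i = 0), if_neg (by omega : ¬ i - 1 = 0)]
      have : p.coeff (i-1-1) / p.coeff (i-1) < p.coeff (i-1) / p.coeff i := by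
        nlinarith
      linarith
  have hxlt : ∀ i j, i ≤ j → j ≤ n → x j ≤ x i := by
    intro i j hij hjn
    induction j with
    | zero =>
      have h0 : i = 0 := Nat.le_zero.mp hij
      rw [h0]
    | succ m ih =>
      rcases Nat.lt_or_ge i (m+1) with hlt | hge
      · have h2 := hxdec (m+1) (by omega) hjn
        have e : m + 1 - 1 = m := by omega
        rw [e] at h2
        have := ih (by omega) (by omega)
        linarith
      · have h0 : i = m+1 := by omega
        rw [h0]
  have hroot : ∀ i : ℕ, ∃ r : ℝ, i + 1 ≤ n →
      x (i+1) < r ∧ r < x i ∧ p.eval r = 0 := by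
    intro i
    by_cases hi : i + 1 ≤ n
    · have hab : x (i+1) ≤ x i := by
        have := hxdec (i+1) (by omega) hi
        simpa using this.le
      have hcont : ContinuousOn (fun y => p.eval y) (Set.Icc (x (i+1)) (x i)) :=
        (Polynomial.continuous p).continuousOn
      have hA := hsign (i+1) hi
      have hB := hsign i (by omega)
      rcases Nat.even_or_odd i with he | ho
      · have e1 : (-1:ℝ)^i = 1 := Even.neg_one_pow he
        have e2 : (-1:ℝ)^(i+1) = -1 := Odd.neg_one_pow (Even.add_one he)
        rw [e1] at hB; rw [e2] at hA
        have hmem : (0:ℝ) ∈ Set.Ioo (p.eval (x (i+1))) (p.eval (x i)) := by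
          constructor <;> [linarith; linarith]
        obtain ⟨r, hr1, hr2⟩ := intermediate_value_Ioo hab hcont hmem
        exact ⟨r, fun _ => ⟨hr1.1, hr1.2, hr2⟩⟩
      · have e1 : (-1:ℝ)^i = -1 := Odd.neg_one_pow ho
        have e2 : (-1:ℝ)^(i+1) = 1 := by
          rw [pow_succ, Odd.neg_one_pow ho]; norm_num
        rw [e1] at hB; rw [e2] at hA
        have hmem : (0:ℝ) ∈ Set.Ioo (p.eval (x i)) (p.eval (x (i+1))) := by
          constructor <;> [linarith; linarith]
        obtain ⟨r, hr1, hr2⟩ := intermediate_value_Ioo' hab hcont hmem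
        exact ⟨r, fun _ => ⟨hr1.1, hr1.2, hr2⟩⟩
    · exact ⟨0, fun h => absurd h hi⟩
  choose r hr using hroot
  have hrdec : ∀ i j, i < j → j + 1 ≤ n → r j < r i := by
    intro i j hij hjn
    obtain ⟨hj1, hj2, _⟩ := hr j hjn
    obtain ⟨hi1, hi2, _⟩ := hr i (by omega)
    have : x j ≤ x (i+1) := hxlt (i+1) j (by omega) (by omega)
    linarith
  have hinj : Set.InjOn (fun i => r i) (Finset.range n) := by
    intro i hi j hj hij
    simp only [Finset.coe_range, Set.mem_Iio] at hi hj
    by_contra hne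
    simp only at hij
    rcases Nat.lt_or_ge i j with hlt | hge
    · have := hrdec i j hlt (by omega)
      linarith [le_of_eq hij]
    · have hji : j < i := by omega
      have := hrdec j i hji (by omega)
      linarith [ge_of_eq hij]
  have hmem : ∀ i, i < n → r i ∈ p.roots := by
    intro i hi
    rw [mem_roots hp0]
    exact (hr i hi).2.2
  classical
  have hcard : n ≤ Multiset.card p.roots := by
    have h1 : (Finset.range n).card = ((Finset.range n).image (fun i => r i)).card :=
      (Finset.card_image_of_injOn hinj).symm
    have h2 : ((Finset.range n).image (fun i => r i)) ⊆ p.roots.toFinset := by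
      intro y hy
      simp only [Finset.mem_image, Finset.mem_range] at hy
      obtain ⟨i, hi, rfl⟩ := hy
      rw [Multiset.mem_toFinset]
      exact hmem i hi
    calc n = (Finset.range n).card := (Finset.card_range n).symm
      _ = _ := h1
      _ ≤ p.roots.toFinset.card := Finset.card_le_card h2
      _ ≤ Multiset.card p.roots := Multiset.toFinset_card_le _
  rw [splits_iff_card_roots]
  exact le_antisymm (p.card_roots') hcard


lemma prod_supp (s : Multiset ℝ) (hs : ∀ a ∈ s, a ≤ 0) :
    ∃ m, m ≤ Multiset.card s ∧
      (∀ k, m ≤ k → k ≤ Multiset.card s →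
        0 < ((s.map (fun a => X - C a)).prod).coeff k) ∧
      (∀ k, k < m → ((s.map (fun a => X - C a)).prod).coeff k = 0) ∧
      (∀ k, Multiset.card s < k → ((s.map (fun a => X - C a)).prod).coeff k = 0) := by
  induction s using Multiset.induction_on with
  | empty =>
    refine ⟨0, le_refl _, ?_, ?_, ?_⟩
    · intro k h1 h2
      have : k = 0 := by simpa using h2
      subst this
      simp
    · intro k h1; omega
    · intro k h1
      simp only [Multiset.map_zero, Multiset.prod_zero, Polynomial.coeff_one]
      simp at h1
      simp [Nat.pos_iff_ne_zero.mp h1]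
  | cons a s ih =>
    obtain ⟨m, hm, hpos, hlo, hhi⟩ := ih (fun x hx => hs x (Multiset.mem_cons_of_mem hx))
    have ha : a ≤ 0 := hs a (Multiset.mem_cons_self a s)
    set q := (s.map (fun a => X - C a)).prod with hq
    have hnn : ∀ k, 0 ≤ q.coeff k := by
      intro k
      rcases lt_or_ge k m with hlt | hge
      · rw [hlo k hlt]
      · rcases le_or_gt k (Multiset.card s) with h2 | h2
        · exact (hpos k hge h2).le
        · rw [hhi k h2]
    have hcons : ((a ::ₘ s).map (fun a => X - C a)).prod = q * (X - C a) := by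
      rw [Multiset.map_cons, Multiset.prod_cons, mul_comm]
    have hcard : Multiset.card (a ::ₘ s) = Multiset.card s + 1 := by simp
    have hc0 : (q * (X - C a)).coeff 0 = (-a) * q.coeff 0 := by
      rw [Polynomial.mul_coeff_zero]
      simp
      ring
    have hck : ∀ k, (q * (X - C a)).coeff (k+1) = q.coeff k + (-a) * q.coeff (k+1) := by
      intro k
      rw [Polynomial.coeff_mul_X_sub_C]
      ring
    rcases eq_or_lt_of_le ha with ha0 | ha0
    · -- a = 0
      subst ha0
      refine ⟨m + 1, by omega, ?_, ?_, ?_⟩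
      · intro k h1 h2
        rw [hcons]
        obtain ⟨k', rfl⟩ : ∃ k', k = k' + 1 := ⟨k - 1, by omega⟩
        rw [hck]
        rw [hcard] at h2
        have := hpos k' (by omega) (by omega)
        nlinarith
      · intro k h1
        rw [hcons]
        rcases Nat.eq_zero_or_pos k with rfl | hk0
        · rw [hc0]; ring
        · obtain ⟨k', rfl⟩ : ∃ k', k = k' + 1 := ⟨k - 1, by omega⟩
          rw [hck, hlo k' (by omega)]
          ring
      · intro k h1
        rw [hcons, hcard] at *
        obtain ⟨k', rfl⟩ : ∃ k', k = k' + 1 := ⟨k - 1, by omega⟩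
        rw [hck, hhi k' (by omega), hhi (k'+1) (by omega)]
        ring
    · -- a < 0
      have hb : 0 < -a := by linarith
      refine ⟨m, by omega, ?_, ?_, ?_⟩
      · intro k h1 h2
        rw [hcons]
        rw [hcard] at h2
        rcases Nat.eq_zero_or_pos k with rfl | hk0
        · rw [hc0]
          have hm0 : m = 0 := by omega
          exact mul_pos hb (hpos 0 (by omega) (by omega))
        · obtain ⟨k', rfl⟩ : ∃ k', k = k' + 1 := ⟨k - 1, by omega⟩
          rw [hck]
          rcases lt_or_ge k' m with hk'm | hk'm
          · have : k' + 1 = m := by omega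
            rw [hlo k' hk'm]
            have := hpos (k'+1) (by omega) (by omega)
            nlinarith
          · have hk'c : k' ≤ Multiset.card s := by omega
            have h1' := hpos k' hk'm hk'c
            have h2' := hnn (k'+1)
            nlinarith
      · intro k h1
        rw [hcons]
        rcases Nat.eq_zero_or_pos k with rfl | hk0
        · rw [hc0, hlo 0 h1]; ring
        · obtain ⟨k', rfl⟩ : ∃ k', k = k' + 1 := ⟨k - 1, by omega⟩
          rw [hck, hlo k' (by omega), hlo (k'+1) (by omega)]
          ring
      · intro k h1
        rw [hcons, hcard] at *
        obtain ⟨k', rfl⟩ : ∃ k', k = k' + 1 := ⟨k - 1, by omega⟩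
        rw [hck, hhi k' (by omega), hhi (k'+1) (by omega)]
        ring

lemma interval_card (p : Polynomial ℝ) (hp : p ≠ 0)
    (hsp : Splits p) (hnn : ∀ k, 0 ≤ p.coeff k) :
    p.natDegree + 1 ≤ p.support.card + p.natTrailingDegree := by
  have hroots_le : ∀ r ∈ p.roots, r ≤ 0 := by
    intro r hr
    rw [mem_roots hp] at hr
    by_contra hpos
    push_neg at hpos
    have heval : p.eval r = 0 := hr
    have : 0 < p.eval r := by
      rw [eval_eq_sum_range]
      apply Finset.sum_pos'
      · intro i _
        exact mul_nonneg (hnn i) (by positivity)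
      · refine ⟨p.natDegree, Finset.self_mem_range_succ _, ?_⟩
        have h1 : p.coeff p.natDegree ≠ 0 := by
          intro h
          exact hp (leadingCoeff_eq_zero.mp h)
        have h2 : 0 < p.coeff p.natDegree := lt_of_le_of_ne (hnn _) (Ne.symm h1)
        positivity
    linarith
  have hfact := (C_leadingCoeff_mul_prod_multiset_X_sub_C (splits_iff_card_roots.mp hsp)).symm
  have hcr : Multiset.card p.roots = p.natDegree := splits_iff_card_roots.mp hsp
  obtain ⟨m, hm, hpos, hlo, hhi⟩ := prod_supp p.roots hroots_le
  rw [hcr] at hm hpos hhi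
  have hL : 0 < p.leadingCoeff := lt_of_le_of_ne (hnn _) (Ne.symm (leadingCoeff_ne_zero.mpr hp))
  have hcoeff : ∀ k, p.coeff k = p.leadingCoeff * ((p.roots.map (fun a => X - C a)).prod).coeff k := by
    intro k
    conv_lhs => rw [hfact]
    rw [coeff_C_mul]
  have hsub : Finset.Icc m p.natDegree ⊆ p.support := by
    intro k hk
    rw [Finset.mem_Icc] at hk
    rw [mem_support_iff, hcoeff k]
    have := hpos k hk.1 hk.2
    positivity
  have hcard : p.natDegree + 1 - m ≤ p.support.card := by
    calc p.natDegree + 1 - m = (Finset.Icc m p.natDegree).card := (Nat.card_Icc _ _).symm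
      _ ≤ p.support.card := Finset.card_le_card hsub
  have htd : m ≤ p.natTrailingDegree := by
    apply le_natTrailingDegree hp
    intro j hj
    rw [hcoeff j, hlo j hj]
    ring
  omega

end KurtzAux

/-- If `f = g·h` with `g, h` having nonnegative coefficients and at most `t` monomials each,
and `f` satisfies the Kurtz condition, then `deg f ≤ 2t`. -/

theorem kurtz_product_degree_bound (t : ℕ) (g h : Polynomial ℝ)
    (hg : ∀ n, 0 ≤ g.coeff n) (hh : ∀ n, 0 ≤ h.coeff n)
    (hgt : g.support.card ≤ t) (hht : h.support.card ≤ t)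
    (f : Polynomial ℝ) (hf : f = g * h)
    (hkurtz : ∀ i : ℕ, 1 ≤ i → i ≤ f.natDegree - 1 →
      (f.coeff i) ^ 2 > 4 * (f.coeff (i - 1) * f.coeff (i + 1))) :
    f.natDegree ≤ 2 * t := by
  by_cases hg0 : g = 0
  · rw [hf, hg0, zero_mul]; simp
  by_cases hh0 : h = 0
  · rw [hf, hh0, mul_zero]; simp
  have hf0 : f ≠ 0 := by rw [hf]; exact mul_ne_zero hg0 hh0
  have ht1 : 1 ≤ t := by
    have := Finset.card_pos.mpr (Polynomial.support_nonempty.mpr hg0)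
    omega
  set d := f.natDegree with hd
  rcases Nat.lt_or_ge d 2 with hd2 | hd2
  · omega
  have hfnn : ∀ n, 0 ≤ f.coeff n := by
    intro n
    rw [hf, coeff_mul]
    apply Finset.sum_nonneg
    intro x _
    exact mul_nonneg (hg x.1) (hh x.2)
  have hmid : ∀ i, 1 ≤ i → i + 1 ≤ d → 0 < f.coeff i := by
    intro i h1 h2
    have hki := hkurtz i h1 (by omega)
    rcases lt_or_eq_of_le (hfnn i) with hlt | heq
    · exact hlt
    · exfalso
      rw [← heq] at hki
      have h4 : 0 ≤ f.coeff (i-1) * f.coeff (i+1) := mul_nonneg (hfnn _) (hfnn _)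
      nlinarith
  have hlead : 0 < f.coeff d := by
    refine lt_of_le_of_ne (hfnn d) (Ne.symm ?_)
    rw [hd]
    exact leadingCoeff_ne_zero.mpr hf0
  have hsplit_ntd : Splits f ∧ f.natTrailingDegree ≤ 1 := by
    rcases lt_or_eq_of_le (hfnn 0) with h0 | h0
    · have hposall : ∀ i ≤ f.natDegree, 0 < f.coeff i := by
        intro i hi
        rcases Nat.eq_zero_or_pos i with rfl | h1
        · exact h0
        rcases Nat.lt_or_ge i d with hi2 | hi2
        · exact hmid i h1 (by omega)
        · have : i = d := by omega
          rw [this]; exact hlead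
      have hkf : ∀ i, 1 ≤ i → i + 1 ≤ f.natDegree →
          4*(f.coeff (i-1) * f.coeff (i+1)) < (f.coeff i)^2 := by
        intro i h1 h2
        exact hkurtz i h1 (by omega)
      refine ⟨kurtz_splits f hposall hkf, ?_⟩
      exact le_trans (natTrailingDegree_le_of_ne_zero (ne_of_gt h0)) (by omega)
    · -- coeff 0 = 0
      set q := f.divX with hqdef
      have hfq : f = X * q := by
        have hX := X_mul_divX_add f
        rw [← h0] at hX
        simpa using hX.symm
      have hqd : q.natDegree = d - 1 := by
        rw [hqdef, natDegree_divX_eq_natDegree_tsub_one, hd]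
      have hqpos : ∀ i ≤ q.natDegree, 0 < q.coeff i := by
        intro i hi
        rw [hqd] at hi
        rw [hqdef, coeff_divX]
        rcases Nat.lt_or_ge (i+1) d with hi2 | hi2
        · exact hmid (i+1) (by omega) (by omega)
        · have : i + 1 = d := by omega
          rw [this]; exact hlead
      have hqk : ∀ i, 1 ≤ i → i + 1 ≤ q.natDegree →
          4*(q.coeff (i-1) * q.coeff (i+1)) < (q.coeff i)^2 := by
        intro i h1 h2
        rw [hqd] at h2
        simp only [hqdef, coeff_divX]
        have e : i - 1 + 1 = i := by omega
        rw [e]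
        have := hkurtz (i+1) (by omega) (by omega)
        have e2 : i + 1 - 1 = i := by omega
        rw [e2] at this
        have e3 : i + 1 + 1 = i + 2 := by omega
        rw [e3] at this ⊢
        linarith
      have hqs := kurtz_splits q hqpos hqk
      constructor
      · rw [hfq]
        exact Splits.X.mul hqs
      · have hc1 : f.coeff 1 ≠ 0 := by
          have := hqpos 0 (Nat.zero_le _)
          rw [hqdef, coeff_divX] at this
          norm_num at this
          exact ne_of_gt this
        exact natTrailingDegree_le_of_ne_zero hc1
  obtain ⟨hsplits, hntd⟩ := hsplit_ntd
  have hgdvd : g ∣ f := ⟨h, hf⟩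
  have hhdvd : h ∣ f := ⟨g, by rw [hf, mul_comm]⟩
  have hgs := Splits.of_dvd hsplits hf0 hgdvd
  have hhs := Splits.of_dvd hsplits hf0 hhdvd
  have hgi := interval_card g hg0 hgs hg
  have hhi := interval_card h hh0 hhs hh
  have hdeg : d = g.natDegree + h.natDegree := by
    rw [hd, hf]; exact natDegree_mul hg0 hh0
  have htrail : g.natTrailingDegree + h.natTrailingDegree ≤ 1 := by
    have hmt := natTrailingDegree_mul (p := g) (q := h) hg0 hh0
    rw [← hf] at hmt
    omega
  omega
end
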